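/- arXiv:0810.1824 — 3 statements merged into one kernel-verified Lean document; each statement's English description precedes it below -/
import Mathlib

section
/- Garsia–Rodemich–Rumsey inequality for doubly twisted increments. Let (V,‖·‖) be a Banach space, T > 0 and ξ, η ≥ 0. Let R : {(t,s) : 0 ≤ s ≤ t ≤ T} → V be continuous with R_{tt} = 0 for all t. Let ψ, φ : [0,∞) → [0,∞) be continuous and strictly increasing with ψ(0) = 0, φ(0) = 0 and ψ(x) → ∞ as x → ∞, and set U = ∬_{0<v<w<T} ψ( ‖R_{wv}‖/φ(w−v) ) dv dw. Assume there exists C ≥ 0 such that for all 0 ≤ ℓ₁ < ℓ₂ ≤ T, sup_{ℓ₁ ≤ u ≤ ℓ₂} ‖R_{ℓ₂ℓ₁} − e^{−η(u−ℓ₁)} R_{ℓ₂u} − e^{−ξ(ℓ₂−u)} R_{uℓ₁}‖ ≤ ψ^{−1}( 4C/(ℓ₂−ℓ₁)² ) φ(ℓ₂−ℓ₁). Then there exists an absolute constant c > 0 (independent of all the data) such that for all 0 ≤ s ≤ t ≤ T, ‖R_{ts}‖ ≤ c ∫₀^{t−s} [ ψ^{−1}(4U/r²) + ψ^{−1}(4C/r²)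 ] dφ(r), where the integral is the Lebesgue–Stieltjes integral with respect to φ, with values in [0,∞]. -/
open MeasureTheory Set Function Filter
open scoped ENNReal

/-- Markov bound: the set where `f > 2F/a` has at most half measure. -/
lemma half_bad {f : ℝ → ℝ≥0∞} {A : Set ℝ} {a : ℝ}
    (ha : 0 < a) (hμ : volume A = ENNReal.ofReal a)
    (hf : Measurable f) {F : ℝ≥0∞} (hF : F ≠ ⊤)
    (hFi : ∫⁻ x in A, f x ≤ F) :
    2 * volume.restrict A {y | 2 * F / ENNReal.ofReal a < f y} ≤ ENNReal.ofReal a := by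
  set ν := volume.restrict A with hν
  set K : ℝ≥0∞ := 2 * F / ENNReal.ofReal a with hK
  have ha0 : ENNReal.ofReal a ≠ 0 := by
    simp [ENNReal.ofReal_eq_zero, not_le, ha]
  have haT : ENNReal.ofReal a ≠ ⊤ := ENNReal.ofReal_ne_top
  rcases eq_or_ne F 0 with hF0 | hF0
  · -- F = 0 : f = 0 a.e., bad set is null
    have hf0 : ∫⁻ x, f x ∂ν = 0 := le_antisymm (by simpa [hF0] using hFi) zero_le
    have hae : f =ᵐ[ν] 0 := (lintegral_eq_zero_iff hf).1 hf0
    have hnull : ν {y | K < f y} = 0 := by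
      refine measure_mono_null ?_ hae
      intro y hy
      simp only [mem_setOf_eq, hK, hF0, mul_zero, ENNReal.zero_div] at hy
      simpa [pos_iff_ne_zero] using hy
    rw [hnull]
    simp
  · -- F > 0
    have hK0 : K ≠ 0 := by
      rw [hK]; simp [ENNReal.div_eq_zero_iff, hF0, haT]
    have hKT : K ≠ ⊤ := by
      rw [hK]; exact (ENNReal.div_lt_top (by finiteness) ha0).ne
    have hmark : K * ν {y | K ≤ f y} ≤ F := by
      calc K * ν {y | K ≤ f y} ≤ ∫⁻ x, f x ∂ν := mul_meas_ge_le_lintegral₀ hf.aemeasurable K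
        _ ≤ F := hFi
    have hsub : ν {y | K < f y} ≤ ν {y | K ≤ f y} :=
      measure_mono (setOf_subset_setOf.2 fun y hy => hy.le)
    have h2 : K * (2 * ν {y | K < f y}) ≤ K * ENNReal.ofReal a := by
      calc K * (2 * ν {y | K < f y}) = 2 * (K * ν {y | K < f y}) := by ring
        _ ≤ 2 * (K * ν {y | K ≤ f y}) := by gcongr
        _ ≤ 2 * F := by gcongr
        _ = K * ENNReal.ofReal a := by
            rw [hK, ENNReal.div_mul_cancel ha0 haT]
    exact (ENNReal.mul_le_mul_iff_right hK0 hKT).1 h2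

/-- Strict version: the set where `g > 2G/a` has strictly less than half measure. -/
lemma half_bad_strict {g : ℝ → ℝ≥0∞} {A : Set ℝ} (hA : MeasurableSet A) {a : ℝ}
    (ha : 0 < a) (hμ : volume A = ENNReal.ofReal a)
    (hg : Measurable g) {G : ℝ≥0∞} (hG : G ≠ ⊤)
    (hGi : ∫⁻ x in A, g x ≤ G) :
    2 * volume.restrict A {y | 2 * G / ENNReal.ofReal a < g y} < ENNReal.ofReal a := by
  set ν := volume.restrict A with hν
  set K : ℝ≥0∞ := 2 * G / ENNReal.ofReal a with hK
  have ha0 : ENNReal.ofReal a ≠ 0 := by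
    simp [ENNReal.ofReal_eq_zero, not_le, ha]
  have haT : ENNReal.ofReal a ≠ ⊤ := ENNReal.ofReal_ne_top
  have hle := half_bad ha hμ hg hG hGi
  rw [← hν, ← hK] at hle
  rcases lt_or_eq_of_le hle with h | h
  · exact h
  -- equality case : derive a contradiction
  exfalso
  set B : Set ℝ := {y | K < g y} with hB
  have hBmeas : MeasurableSet B := measurableSet_lt measurable_const hg
  have hνB2 : 2 * ν B = ENNReal.ofReal a := h
  have hνB0 : ν B ≠ 0 := by
    intro h0
    rw [h0, mul_zero] at hνB2
    exact ha0 hνB2.symm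
  have hνBT : ν B ≠ ⊤ := by
    intro hT
    rw [hT, ENNReal.mul_top two_ne_zero] at hνB2
    exact haT hνB2.symm
  rcases eq_or_ne G 0 with hG0 | hG0
  · -- G = 0 : g = 0 a.e. but g > 0 on B of positive measure
    have hg0 : ∫⁻ x, g x ∂ν = 0 := le_antisymm (by simpa [hG0] using hGi) zero_le
    have hae : g =ᵐ[ν] 0 := (lintegral_eq_zero_iff hg).1 hg0
    have : ν B = 0 := by
      refine measure_mono_null ?_ hae
      intro y hy
      simp only [hB, mem_setOf_eq, hK, hG0, mul_zero, ENNReal.zero_div] at hy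
      simpa [pos_iff_ne_zero] using hy
    exact hνB0 this
  · have hK0 : K ≠ 0 := by
      rw [hK]; simp [ENNReal.div_eq_zero_iff, hG0, haT]
    have hKT : K ≠ ⊤ := by
      rw [hK]; exact (ENNReal.div_lt_top (by finiteness) ha0).ne
    -- K * ν B = G
    have hKB : K * ν B = G := by
      have h1 : 2 * (K * ν B) = 2 * G := by
        calc 2 * (K * ν B) = K * (2 * ν B) := by ring
          _ = K * ENNReal.ofReal a := by rw [hνB2]
          _ = 2 * G := by rw [hK, ENNReal.div_mul_cancel ha0 haT]
      exact (ENNReal.mul_right_inj two_ne_zero (by finiteness)).1 h1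
    have hup : ∫⁻ x in B, g x ∂ν ≤ K * ν B := by
      calc ∫⁻ x in B, g x ∂ν ≤ ∫⁻ x, g x ∂ν := setLIntegral_le_lintegral _ _
        _ ≤ G := hGi
        _ = K * ν B := hKB.symm
    have hdown : K * ν B ≤ ∫⁻ x in B, g x ∂ν := by
      calc K * ν B = ∫⁻ _ in B, K ∂ν := by rw [setLIntegral_const, mul_comm]
        _ ≤ ∫⁻ x in B, g x ∂ν := by
            refine lintegral_mono_ae ?_
            filter_upwards [ae_restrict_mem hBmeas] with y hy
            exact le_of_lt hy
    have heq : ∫⁻ x in B, g x ∂ν = K * ν B := le_antisymm hup hdown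
    have hKfin : ∫⁻ _ in B, K ∂ν ≠ ⊤ := by
      rw [setLIntegral_const]
      exact ENNReal.mul_ne_top hKT hνBT
    have hsub : ∫⁻ x in B, (g x - K) ∂ν = 0 := by
      rw [lintegral_sub measurable_const hKfin
        (by filter_upwards [ae_restrict_mem hBmeas] with y hy; exact le_of_lt hy)]
      rw [heq, setLIntegral_const, mul_comm, tsub_self]
    have hae : (fun x => g x - K) =ᵐ[ν.restrict B] 0 :=
      (lintegral_eq_zero_iff (hg.sub measurable_const)).1 hsub
    have hres0 : ν.restrict B B = 0 := by
      have hcon : B ⊆ {x | ¬ ((fun x => g x - K) x = 0)} := by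
        intro y hy
        simp only [mem_setOf_eq]
        intro h0
        exact absurd (tsub_eq_zero_iff_le.mp h0) (not_le.2 hy)
      exact le_zero_iff.mp ((measure_mono hcon).trans (le_of_eq hae))
    rw [Measure.restrict_apply hBmeas, inter_self] at hres0
    exact hνB0 hres0

/-- The selection lemma: a point avoiding both bad sets exists. -/
lemma exists_good_point {f g : ℝ → ℝ≥0∞} {A : Set ℝ} (hA : MeasurableSet A) {a : ℝ}
    (ha : 0 < a) (hμ : volume A = ENNReal.ofReal a)
    (hf : Measurable f) (hg : Measurable g) {F G : ℝ≥0∞} (hF : F ≠ ⊤) (hG : G ≠ ⊤)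
    (hFi : ∫⁻ x in A, f x ≤ F) (hGi : ∫⁻ x in A, g x ≤ G) :
    ∃ y ∈ A, f y ≤ 2 * F / ENNReal.ofReal a ∧ g y ≤ 2 * G / ENNReal.ofReal a := by
  by_contra hcon
  push_neg at hcon
  set ν := volume.restrict A with hν
  set Bf : Set ℝ := {y | 2 * F / ENNReal.ofReal a < f y}
  set Bg : Set ℝ := {y | 2 * G / ENNReal.ofReal a < g y}
  have hcover : A ⊆ Bf ∪ Bg := by
    intro y hy
    rcases le_or_gt (f y) (2 * F / ENNReal.ofReal a) with h1 | h1
    · exact Or.inr (hcon y hy h1)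
    · exact Or.inl h1
  have h1 : 2 * ν Bf ≤ ENNReal.ofReal a := half_bad ha hμ hf hF hFi
  have h2 : 2 * ν Bg < ENNReal.ofReal a := half_bad_strict hA ha hμ hg hG hGi
  have hAν : ENNReal.ofReal a ≤ ν (Bf ∪ Bg) := by
    have hA' : ν A = ENNReal.ofReal a := by
      rw [hν, Measure.restrict_apply hA, inter_self, hμ]
    rw [← hA']
    exact measure_mono hcover
  have hsum : ENNReal.ofReal a ≤ ν Bf + ν Bg := hAν.trans (measure_union_le _ _)
  have h3 : 2 * ENNReal.ofReal a ≤ 2 * ν Bf + 2 * ν Bg := by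
    calc 2 * ENNReal.ofReal a ≤ 2 * (ν Bf + ν Bg) := by gcongr
      _ = 2 * ν Bf + 2 * ν Bg := by ring
  have h4 : 2 * ν Bf + 2 * ν Bg < ENNReal.ofReal a + ENNReal.ofReal a :=
    ENNReal.add_lt_add_of_le_of_lt
      (h1.trans_lt ENNReal.ofReal_lt_top).ne h1 h2
  rw [← two_mul] at h4
  have := h3.trans_lt h4
  have h5 : ENNReal.ofReal a < ENNReal.ofReal a :=
    (ENNReal.mul_lt_mul_iff_right two_ne_zero (by finiteness)).1 this
  exact absurd h5 (lt_irrefl _)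


open MeasureTheory Set Function
open scoped ENNReal

universe u

lemma indicator_meas_of_isOpen {f : ℝ × ℝ → ℝ≥0∞} {s : Set (ℝ × ℝ)}
    (hs : IsOpen s) (hf : ContinuousOn f s) : Measurable (s.indicator f) := by
  classical
  have h := ContinuousOn.measurable_piecewise (g := fun _ => (0 : ℝ≥0∞)) hf
    continuousOn_const hs.measurableSet
  simpa [← Pi.zero_def, Set.piecewise_eq_indicator] using h

section kernel

variable {V : Type u} [NormedAddCommGroup V]
variable (T : ℝ) (R : ℝ → ℝ → V) (ψ : ℝ → ℝ) (φ : StieltjesFunction ℝ)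

/-- the integrand of the double integral -/
noncomputable def qfun : ℝ × ℝ → ℝ≥0∞ :=
  fun p => ENNReal.ofReal (ψ (‖R p.1 p.2‖ / φ (p.1 - p.2)))

/-- the open triangle -/
def Oset : Set (ℝ × ℝ) := {p | 0 < p.2 ∧ p.2 < p.1 ∧ p.1 < T}

/-- the extended-by-zero integrand -/
noncomputable def Ffun : ℝ × ℝ → ℝ≥0∞ := (Oset T).indicator (qfun R ψ φ)

lemma isOpen_Oset : IsOpen (Oset T) := by
  have h1 : IsOpen {p : ℝ × ℝ | 0 < p.2} := isOpen_lt continuous_const continuous_snd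
  have h2 : IsOpen {p : ℝ × ℝ | p.2 < p.1} := isOpen_lt continuous_snd continuous_fst
  have h3 : IsOpen {p : ℝ × ℝ | p.1 < T} := isOpen_lt continuous_fst continuous_const
  have : Oset T = ({p : ℝ × ℝ | 0 < p.2} ∩ {p : ℝ × ℝ | p.2 < p.1}) ∩ {p : ℝ × ℝ | p.1 < T} := by
    ext p; simp [Oset, and_assoc]
  rw [this]
  exact (h1.inter h2).inter h3

variable {T R ψ φ}

lemma continuousOn_qfun
    (hR : ContinuousOn (fun p : ℝ × ℝ => R p.1 p.2)
      {p : ℝ × ℝ | 0 ≤ p.2 ∧ p.2 ≤ p.1 ∧ p.1 ≤ T})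
    (hψc : ContinuousOn ψ (Set.Ici 0))
    (hφc : ContinuousOn (φ : ℝ → ℝ) (Set.Ici 0))
    (hφm : StrictMonoOn (φ : ℝ → ℝ) (Set.Ici 0)) (hφ0 : φ 0 = 0) :
    ContinuousOn (qfun R ψ φ) (Oset T) := by
  have hsub : Oset T ⊆ {p : ℝ × ℝ | 0 ≤ p.2 ∧ p.2 ≤ p.1 ∧ p.1 ≤ T} := by
    rintro ⟨w, v⟩ ⟨h1, h2, h3⟩
    exact ⟨le_of_lt h1, le_of_lt h2, le_of_lt h3⟩
  have hnorm : ContinuousOn (fun p : ℝ × ℝ => ‖R p.1 p.2‖) (Oset T) :=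
    (hR.mono hsub).norm
  have hsubmap : ContinuousOn (fun p : ℝ × ℝ => p.1 - p.2) (Oset T) :=
    (continuous_fst.sub continuous_snd).continuousOn
  have hphi : ContinuousOn (fun p : ℝ × ℝ => φ (p.1 - p.2)) (Oset T) := by
    refine ContinuousOn.comp hφc hsubmap ?_
    rintro ⟨w, v⟩ ⟨_, h2, _⟩
    exact le_of_lt (sub_pos.2 h2)
  have hphi_pos : ∀ p ∈ Oset T, φ (p.1 - p.2) ≠ 0 := by
    rintro ⟨w, v⟩ ⟨_, h2, _⟩
    have : (0:ℝ) < φ (w - v) := by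
      rw [← hφ0]
      exact hφm (Set.mem_Ici.mpr (le_refl 0)) (Set.mem_Ici.mpr (le_of_lt (sub_pos.2 h2))) (sub_pos.2 h2)
    exact ne_of_gt this
  have hdiv : ContinuousOn (fun p : ℝ × ℝ => ‖R p.1 p.2‖ / φ (p.1 - p.2)) (Oset T) :=
    hnorm.div hphi hphi_pos
  have hpsi : ContinuousOn (fun p : ℝ × ℝ => ψ (‖R p.1 p.2‖ / φ (p.1 - p.2))) (Oset T) := by
    refine ContinuousOn.comp hψc hdiv ?_
    rintro ⟨w, v⟩ hp
    have h2 := (hp : _ ∧ _ ∧ _).2.1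
    have hpos : (0:ℝ) < φ (w - v) := by
      rw [← hφ0]
      exact hφm (Set.mem_Ici.mpr (le_refl 0)) (Set.mem_Ici.mpr (le_of_lt (sub_pos.2 h2))) (sub_pos.2 h2)
    exact div_nonneg (norm_nonneg _) (le_of_lt hpos)
  exact ENNReal.continuous_ofReal.comp_continuousOn hpsi

lemma measurable_Ffun
    (hR : ContinuousOn (fun p : ℝ × ℝ => R p.1 p.2)
      {p : ℝ × ℝ | 0 ≤ p.2 ∧ p.2 ≤ p.1 ∧ p.1 ≤ T})
    (hψc : ContinuousOn ψ (Set.Ici 0))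
    (hφc : ContinuousOn (φ : ℝ → ℝ) (Set.Ici 0))
    (hφm : StrictMonoOn (φ : ℝ → ℝ) (Set.Ici 0)) (hφ0 : φ 0 = 0) :
    Measurable (Ffun T R ψ φ) :=
  indicator_meas_of_isOpen (isOpen_Oset T) (continuousOn_qfun hR hψc hφc hφm hφ0)

end kernel

section kernel2

variable {V : Type u} [NormedAddCommGroup V]
variable (T : ℝ) (R : ℝ → ℝ → V) (ψ : ℝ → ℝ) (φ : StieltjesFunction ℝ)

/-- integral of the kernel over columns -/
noncomputable def Ibar : ℝ → ℝ≥0∞ := fun w => ∫⁻ v, Ffun T R ψ φ (w, v)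

/-- integral of the kernel over rows -/
noncomputable def Jbar : ℝ → ℝ≥0∞ := fun v => ∫⁻ w, Ffun T R ψ φ (w, v)

variable {T R ψ φ}

lemma measurable_Ibar (hF : Measurable (Ffun T R ψ φ)) : Measurable (Ibar T R ψ φ) :=
  Measurable.lintegral_prod_right' hF

lemma measurable_Jbar (hF : Measurable (Ffun T R ψ φ)) : Measurable (Jbar T R ψ φ) :=
  Measurable.lintegral_prod_right' (hF.comp measurable_swap)

lemma measurable_Fsec_left (hF : Measurable (Ffun T R ψ φ)) (w : ℝ) :
    Measurable (fun v => Ffun T R ψ φ (w, v)) :=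
  hF.comp measurable_prodMk_left

lemma measurable_Fsec_right (hF : Measurable (Ffun T R ψ φ)) (v : ℝ) :
    Measurable (fun w => Ffun T R ψ φ (w, v)) :=
  hF.comp (measurable_id.prodMk measurable_const)

lemma Ibar_eq_of_mem {w : ℝ} (h0 : 0 < w) (hT : w < T) :
    Ibar T R ψ φ w = ∫⁻ v in Set.Ioo 0 w, qfun R ψ φ (w, v) := by
  have heq : (fun v => Ffun T R ψ φ (w, v))
      = (Set.Ioo (0:ℝ) w).indicator (fun v => qfun R ψ φ (w, v)) := by
    funext v
    by_cases hv : v ∈ Set.Ioo (0:ℝ) w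
    · rw [Set.indicator_of_mem hv]
      exact Set.indicator_of_mem (show (w, v) ∈ Oset T from ⟨hv.1, hv.2, hT⟩) _
    · rw [Set.indicator_of_notMem hv]
      refine Set.indicator_of_notMem ?_ _
      intro hmem
      exact hv ⟨hmem.1, hmem.2.1⟩
  rw [Ibar, heq, lintegral_indicator measurableSet_Ioo]

lemma Ibar_eq_zero {w : ℝ} (h : w ∉ Set.Ioo (0:ℝ) T) : Ibar T R ψ φ w = 0 := by
  have heq : ∀ v, Ffun T R ψ φ (w, v) = 0 := by
    intro v
    refine Set.indicator_of_notMem ?_ _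
    rintro ⟨h1, h2, h3⟩
    exact h ⟨lt_trans h1 h2, h3⟩
  simp only [Ibar, heq, lintegral_zero]

lemma lintegral_Ibar_eq :
    ∫⁻ w, Ibar T R ψ φ w
      = ∫⁻ w in Set.Ioo (0:ℝ) T, ∫⁻ v in Set.Ioo (0:ℝ) w,
          ENNReal.ofReal (ψ (‖R w v‖ / φ (w - v))) := by
  rw [← lintegral_add_compl (f := Ibar T R ψ φ) (measurableSet_Ioo (a := (0:ℝ)) (b := T))]
  have h2 : ∫⁻ w in (Set.Ioo (0:ℝ) T)ᶜ, Ibar T R ψ φ w = 0 := by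
    rw [← lintegral_zero (μ := volume.restrict (Set.Ioo (0:ℝ) T)ᶜ)]
    refine setLIntegral_congr_fun measurableSet_Ioo.compl ?_
    exact (fun w hw => Ibar_eq_zero hw)
  rw [h2, add_zero]
  refine setLIntegral_congr_fun measurableSet_Ioo ?_
  refine (fun w hw => ?_)
  rw [Ibar_eq_of_mem hw.1 hw.2]
  rfl

lemma lintegral_Jbar_eq (hF : Measurable (Ffun T R ψ φ)) :
    ∫⁻ v, Jbar T R ψ φ v = ∫⁻ w, Ibar T R ψ φ w := by
  have h := lintegral_lintegral_swap (μ := (volume : Measure ℝ)) (ν := (volume : Measure ℝ))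
    (f := fun w v => Ffun T R ψ φ (w, v))
    (by exact hF.aemeasurable)
  exact h.symm

end kernel2



/-- Generic chain construction by дependent choice. -/
lemma build_chain {α : Type*} (Cond : α → Prop) (Rel : α → α → Prop) (init : α)
    (hinit : Cond init) (hstep : ∀ p, Cond p → ∃ q, Cond q ∧ Rel p q) :
    ∃ seq : ℕ → α, seq 0 = init ∧ (∀ n, Cond (seq n)) ∧ ∀ n, Rel (seq n) (seq (n + 1)) := by
  have hstep' : ∀ p : {p : α // Cond p}, ∃ q : {p : α // Cond p}, Rel p.1 q.1 := by
    rintro ⟨p, hp⟩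
    obtain ⟨q, hq, hr⟩ := hstep p hp
    exact ⟨⟨q, hq⟩, hr⟩
  choose f hf using hstep'
  refine ⟨fun n => (f^[n] ⟨init, hinit⟩).1, rfl, fun n => (f^[n] ⟨init, hinit⟩).2, fun n => ?_⟩
  have hiter : f^[n + 1] ⟨init, hinit⟩ = f (f^[n] ⟨init, hinit⟩) :=
    Function.iterate_succ_apply' f n _
  show Rel (f^[n] ⟨init, hinit⟩).1 (f^[n+1] ⟨init, hinit⟩).1
  rw [hiter]
  exact hf _

/-- Telescoping sum of set integrals over adjacent `Ioc` intervals. -/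
lemma sum_Ioc_telescope (μ : Measure ℝ) (G : ℝ → ℝ≥0∞) {d : ℕ → ℝ}
    (hmono : ∀ n, d (n + 1) ≤ d n) (N : ℕ) :
    ∑ n ∈ Finset.range N, ∫⁻ r in Set.Ioc (d (n + 1)) (d n), G r ∂μ
      = ∫⁻ r in Set.Ioc (d N) (d 0), G r ∂μ := by
  induction N with
  | zero => simp
  | succ N ih =>
    have hanti : Antitone d := antitone_nat_of_succ_le hmono
    have hd0 : d N ≤ d 0 := hanti (Nat.zero_le N)
    rw [Finset.sum_range_succ, ih, add_comm]
    rw [← lintegral_union measurableSet_Ioc (Set.Ioc_disjoint_Ioc_of_le le_rfl)]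
    rw [Set.Ioc_union_Ioc_eq_Ioc (hmono N) hd0]

/-- limit lemma in `ℝ≥0∞`. -/
lemma limit_le_of_tendsto {x y : ℝ≥0∞} {tail : ℕ → ℝ}
    (h : ∀ N, x ≤ y + ENNReal.ofReal (tail N))
    (ht : Tendsto tail atTop (nhds 0)) : x ≤ y := by
  have h1 : Tendsto (fun N => ENNReal.ofReal (tail N)) atTop (nhds 0) := by
    have := ENNReal.tendsto_ofReal ht
    simpa using this
  have h2 : Tendsto (fun N => y + ENNReal.ofReal (tail N)) atTop (nhds y) := by
    simpa using Filter.Tendsto.const_add y h1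
  exact ge_of_tendsto h2 (Filter.Eventually.of_forall h)

section psi

variable {ψ ψinv : ℝ → ℝ}

lemma psi_nonneg (hψm : StrictMonoOn ψ (Set.Ici 0)) (hψ0 : ψ 0 = 0)
    {x : ℝ} (hx : 0 ≤ x) : 0 ≤ ψ x := by
  rcases eq_or_lt_of_le hx with rfl | hx'
  · rw [hψ0]
  · rw [← hψ0]
    exact (hψm (Set.mem_Ici.mpr (le_refl 0)) (Set.mem_Ici.mpr hx) hx').le

lemma psiinv_mono (hψm : StrictMonoOn ψ (Set.Ici 0))
    (hinv2 : ∀ y : ℝ, 0 ≤ y → ψ (ψinv y) = y)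
    (hinv3 : ∀ y : ℝ, 0 ≤ y → 0 ≤ ψinv y)
    {y₁ y₂ : ℝ} (h1 : 0 ≤ y₁) (h12 : y₁ ≤ y₂) : ψinv y₁ ≤ ψinv y₂ := by
  by_contra hcon
  push_neg at hcon
  have h2 : (0:ℝ) ≤ y₂ := le_trans h1 h12
  have := hψm (Set.mem_Ici.mpr (hinv3 y₂ h2)) (Set.mem_Ici.mpr (hinv3 y₁ h1)) hcon
  rw [hinv2 y₁ h1, hinv2 y₂ h2] at this
  linarith

lemma psiinv_ge (hψm : StrictMonoOn ψ (Set.Ici 0)) (hψ0 : ψ 0 = 0)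
    (hinv1 : ∀ x : ℝ, 0 ≤ x → ψinv (ψ x) = x)
    (hinv2 : ∀ y : ℝ, 0 ≤ y → ψ (ψinv y) = y)
    (hinv3 : ∀ y : ℝ, 0 ≤ y → 0 ≤ ψinv y)
    {x y : ℝ} (hx : 0 ≤ x) (hy : 0 ≤ y) (h : ψ x ≤ y) : x ≤ ψinv y := by
  have h0 : (0:ℝ) ≤ ψ x := psi_nonneg hψm hψ0 hx
  calc x = ψinv (ψ x) := (hinv1 x hx).symm
    _ ≤ ψinv y := psiinv_mono hψm hinv2 hinv3 h0 h

end psi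

section tri


variable {V : Type u} [NormedAddCommGroup V] [NormedSpace ℝ V]

/-- Triangle inequality for the twisted increment. -/
lemma twisted_triangle {R : ℝ → ℝ → V} {T ξ η C : ℝ} {ψinv : ℝ → ℝ} {φ : StieltjesFunction ℝ}
    (hξ : 0 ≤ ξ) (hη : 0 ≤ η)
    (htw : ∀ l₁ l₂ : ℝ, 0 ≤ l₁ → l₁ < l₂ → l₂ ≤ T → ∀ u : ℝ, l₁ ≤ u → u ≤ l₂ →
      ‖R l₂ l₁ - Real.exp (-η * (u - l₁)) • R l₂ u
          - Real.exp (-ξ * (l₂ - u)) • R u l₁‖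
        ≤ ψinv (4 * C / (l₂ - l₁) ^ 2) * φ (l₂ - l₁))
    {l₁ l₂ u : ℝ} (h0 : 0 ≤ l₁) (h12 : l₁ < l₂) (h2T : l₂ ≤ T)
    (hu1 : l₁ ≤ u) (hu2 : u ≤ l₂) :
    ‖R l₂ l₁‖ ≤ ‖R l₂ u‖ + ‖R u l₁‖ + ψinv (4 * C / (l₂ - l₁) ^ 2) * φ (l₂ - l₁) := by
  have h := htw l₁ l₂ h0 h12 h2T u hu1 hu2
  set e₁ := Real.exp (-η * (u - l₁)) with he₁
  set e₂ := Real.exp (-ξ * (l₂ - u)) with he₂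
  have he₁1 : e₁ ≤ 1 := by
    rw [he₁, ← Real.exp_zero]
    exact Real.exp_le_exp.2 (by nlinarith)
  have he₂1 : e₂ ≤ 1 := by
    rw [he₂, ← Real.exp_zero]
    exact Real.exp_le_exp.2 (by nlinarith)
  have he₁0 : 0 ≤ e₁ := Real.exp_nonneg _
  have he₂0 : 0 ≤ e₂ := Real.exp_nonneg _
  have hdec : R l₂ l₁ = (R l₂ l₁ - e₁ • R l₂ u - e₂ • R u l₁) + e₁ • R l₂ u + e₂ • R u l₁ := by
    abel
  calc ‖R l₂ l₁‖
      = ‖(R l₂ l₁ - e₁ • R l₂ u - e₂ • R u l₁) + e₁ • R l₂ u + e₂ • R u l₁‖ := by rw [← hdec]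
    _ ≤ ‖(R l₂ l₁ - e₁ • R l₂ u - e₂ • R u l₁) + e₁ • R l₂ u‖ + ‖e₂ • R u l₁‖ :=
        norm_add_le _ _
    _ ≤ ‖R l₂ l₁ - e₁ • R l₂ u - e₂ • R u l₁‖ + ‖e₁ • R l₂ u‖ + ‖e₂ • R u l₁‖ := by
        gcongr
        exact norm_add_le _ _
    _ ≤ ψinv (4 * C / (l₂ - l₁) ^ 2) * φ (l₂ - l₁) + ‖R l₂ u‖ + ‖R u l₁‖ := by
        gcongr
        · rw [norm_smul, Real.norm_eq_abs, abs_of_nonneg he₁0]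
          exact mul_le_of_le_one_left (norm_nonneg _) he₁1
        · rw [norm_smul, Real.norm_eq_abs, abs_of_nonneg he₂0]
          exact mul_le_of_le_one_left (norm_nonneg _) he₂1
    _ = ‖R l₂ u‖ + ‖R u l₁‖ + ψinv (4 * C / (l₂ - l₁) ^ 2) * φ (l₂ - l₁) := by ring

end tri


lemma two_ofReal_div {b c : ℝ} (hb : 0 ≤ b) (hc : 0 < c) :
    2 * ENNReal.ofReal b / ENNReal.ofReal c = ENNReal.ofReal (2 * b / c) := by
  rw [ENNReal.ofReal_div_of_pos hc, ENNReal.ofReal_mul (by norm_num : (0:ℝ) ≤ 2)]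
  congr 1
  simp

lemma half_point {φ : StieltjesFunction ℝ} (hφc : ContinuousOn (φ : ℝ → ℝ) (Set.Ici 0))
    (hφm : StrictMonoOn (φ : ℝ → ℝ) (Set.Ici 0)) (hφ0 : φ 0 = 0)
    {δ : ℝ} (hδ : 0 < δ) : ∃ d : ℝ, 0 < d ∧ d < δ ∧ φ d = φ δ / 2 := by
  have hφδ : 0 < φ δ := by
    rw [← hφ0]
    exact hφm (Set.mem_Ici.mpr (le_refl 0)) (Set.mem_Ici.mpr hδ.le) hδ
  have hmem : φ δ / 2 ∈ Set.Ioo (φ 0) (φ δ) := by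
    rw [hφ0]; constructor <;> linarith
  have hsub := intermediate_value_Ioo hδ.le (hφc.mono (Set.Icc_subset_Ici_self))
  obtain ⟨d, hd, hdeq⟩ := hsub hmem
  exact ⟨d, hd.1, hd.2, hdeq⟩
lemma stepD_exists
    {V : Type u} [NormedAddCommGroup V]
    {T : ℝ} {R : ℝ → ℝ → V} {ψ ψinv : ℝ → ℝ} {φ : StieltjesFunction ℝ}
    (hψm : StrictMonoOn ψ (Set.Ici 0)) (hψ0 : ψ 0 = 0)
    (hinv1 : ∀ x : ℝ, 0 ≤ x → ψinv (ψ x) = x)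
    (hinv2 : ∀ y : ℝ, 0 ≤ y → ψ (ψinv y) = y)
    (hinv3 : ∀ y : ℝ, 0 ≤ y → 0 ≤ ψinv y)
    (hφm : StrictMonoOn (φ : ℝ → ℝ) (Set.Ici 0)) (hφ0 : φ 0 = 0)
    (hφc : ContinuousOn (φ : ℝ → ℝ) (Set.Ici 0))
    {s t U : ℝ} (hs : 0 ≤ s) (hst : s < t) (htT : t ≤ T) (hU : 0 ≤ U)
    (hF : Measurable (Ffun T R ψ φ))
    (hItot : ∫⁻ w, Ibar T R ψ φ w ≤ ENNReal.ofReal U) :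
    ∀ p : ℝ × ℝ,
      (s < p.1 ∧ p.1 < t ∧ 0 < p.2 ∧ p.2 ≤ t - s ∧ p.1 - s < p.2 ∧
        Ibar T R ψ φ p.1 ≤ ENNReal.ofReal (2 * U / p.2)) →
      ∃ q : ℝ × ℝ,
        (s < q.1 ∧ q.1 < t ∧ 0 < q.2 ∧ q.2 ≤ t - s ∧ q.1 - s < q.2 ∧
          Ibar T R ψ φ q.1 ≤ ENNReal.ofReal (2 * U / q.2)) ∧
        (q.2 < p.1 - s ∧ φ q.2 = φ (p.1 - s) / 2 ∧ q.1 < p.1 ∧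
          ‖R p.1 q.1‖ ≤ ψinv (4 * U / (q.2 * p.2)) * φ (p.1 - q.1)) := by
  rintro ⟨x, D⟩ ⟨hsx, hxt, hD0, hDts, hxD, hIx⟩
  simp only at hsx hxt hD0 hDts hxD hIx
  obtain ⟨d, hd0, hdδ, hdφ⟩ := half_point hφc hφm hφ0 (show (0:ℝ) < x - s by linarith)
  have hA : MeasurableSet (Set.Ioo s (s + d)) := measurableSet_Ioo
  have hvol : volume (Set.Ioo s (s + d)) = ENNReal.ofReal d := by
    rw [Real.volume_Ioo]; congr 1; ring
  have hIbound : ∫⁻ w in Set.Ioo s (s + d), Ibar T R ψ φ w ≤ ENNReal.ofReal U :=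
    (setLIntegral_le_lintegral _ _).trans hItot
  have hsecm : Measurable (fun v => Ffun T R ψ φ (x, v)) := measurable_Fsec_left hF x
  have hsecbound : ∫⁻ v in Set.Ioo s (s + d), Ffun T R ψ φ (x, v)
      ≤ ENNReal.ofReal (2 * U / D) := by
    calc ∫⁻ v in Set.Ioo s (s + d), Ffun T R ψ φ (x, v)
        ≤ ∫⁻ v, Ffun T R ψ φ (x, v) := setLIntegral_le_lintegral _ _
      _ = Ibar T R ψ φ x := rfl
      _ ≤ ENNReal.ofReal (2 * U / D) := hIx
  obtain ⟨y, hyA, hy1, hy2⟩ := exists_good_point hA hd0 hvol (measurable_Ibar hF) hsecm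
    ENNReal.ofReal_ne_top ENNReal.ofReal_ne_top hIbound hsecbound
  obtain ⟨hsy, hy_sd⟩ := hyA
  rw [two_ofReal_div hU hd0] at hy1
  have hy2' : Ffun T R ψ φ (x, y) ≤ ENNReal.ofReal (4 * U / (d * D)) := by
    rw [two_ofReal_div (by positivity) hd0] at hy2
    refine hy2.trans (le_of_eq ?_)
    congr 1
    field_simp
    ring
  have hyx : y < x := by linarith
  have hO : (x, y) ∈ Oset T := ⟨by linarith, hyx, by linarith⟩
  have hq : qfun R ψ φ (x, y) ≤ ENNReal.ofReal (4 * U / (d * D)) := by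
    rwa [Ffun, Set.indicator_of_mem hO] at hy2'
  have hφxy : (0:ℝ) < φ (x - y) := by
    rw [← hφ0]
    exact hφm (Set.mem_Ici.mpr (le_refl 0)) (Set.mem_Ici.mpr (by linarith)) (by linarith)
  have h4nn : (0:ℝ) ≤ 4 * U / (d * D) := by positivity
  have hval : ψ (‖R x y‖ / φ (x - y)) ≤ 4 * U / (d * D) :=
    (ENNReal.ofReal_le_ofReal_iff h4nn).1 hq
  have hvnn : (0:ℝ) ≤ ‖R x y‖ / φ (x - y) := div_nonneg (norm_nonneg _) hφxy.le
  have hle := psiinv_ge hψm hψ0 hinv1 hinv2 hinv3 hvnn h4nn hval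
  have hnorm : ‖R x y‖ ≤ ψinv (4 * U / (d * D)) * φ (x - y) := by
    have h := mul_le_mul_of_nonneg_right hle hφxy.le
    rwa [div_mul_cancel₀ _ (ne_of_gt hφxy)] at h
  exact ⟨(y, d), ⟨hsy, by linarith, hd0, by linarith, by linarith, hy1⟩,
    ⟨hdδ, hdφ, hyx, hnorm⟩⟩
lemma stepU_exists
    {V : Type u} [NormedAddCommGroup V]
    {T : ℝ} {R : ℝ → ℝ → V} {ψ ψinv : ℝ → ℝ} {φ : StieltjesFunction ℝ}
    (hψm : StrictMonoOn ψ (Set.Ici 0)) (hψ0 : ψ 0 = 0)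
    (hinv1 : ∀ x : ℝ, 0 ≤ x → ψinv (ψ x) = x)
    (hinv2 : ∀ y : ℝ, 0 ≤ y → ψ (ψinv y) = y)
    (hinv3 : ∀ y : ℝ, 0 ≤ y → 0 ≤ ψinv y)
    (hφm : StrictMonoOn (φ : ℝ → ℝ) (Set.Ici 0)) (hφ0 : φ 0 = 0)
    (hφc : ContinuousOn (φ : ℝ → ℝ) (Set.Ici 0))
    {s t U : ℝ} (hs : 0 ≤ s) (hst : s < t) (htT : t ≤ T) (hU : 0 ≤ U)
    (hF : Measurable (Ffun T R ψ φ))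
    (hJtot : ∫⁻ v, Jbar T R ψ φ v ≤ ENNReal.ofReal U) :
    ∀ p : ℝ × ℝ,
      (s < p.1 ∧ p.1 < t ∧ 0 < p.2 ∧ p.2 ≤ t - s ∧ t - p.1 < p.2 ∧
        Jbar T R ψ φ p.1 ≤ ENNReal.ofReal (2 * U / p.2)) →
      ∃ q : ℝ × ℝ,
        (s < q.1 ∧ q.1 < t ∧ 0 < q.2 ∧ q.2 ≤ t - s ∧ t - q.1 < q.2 ∧
          Jbar T R ψ φ q.1 ≤ ENNReal.ofReal (2 * U / q.2)) ∧
        (q.2 < t - p.1 ∧ φ q.2 = φ (t - p.1) / 2 ∧ p.1 < q.1 ∧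
          ‖R q.1 p.1‖ ≤ ψinv (4 * U / (q.2 * p.2)) * φ (q.1 - p.1)) := by
  rintro ⟨x, D⟩ ⟨hsx, hxt, hD0, hDts, hxD, hJx⟩
  simp only at hsx hxt hD0 hDts hxD hJx
  obtain ⟨d, hd0, hdδ, hdφ⟩ := half_point hφc hφm hφ0 (show (0:ℝ) < t - x by linarith)
  have hA : MeasurableSet (Set.Ioo (t - d) t) := measurableSet_Ioo
  have hvol : volume (Set.Ioo (t - d) t) = ENNReal.ofReal d := by
    rw [Real.volume_Ioo]; congr 1; ring
  have hJbound : ∫⁻ v in Set.Ioo (t - d) t, Jbar T R ψ φ v ≤ ENNReal.ofReal U :=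
    (setLIntegral_le_lintegral _ _).trans hJtot
  have hsecm : Measurable (fun w => Ffun T R ψ φ (w, x)) := measurable_Fsec_right hF x
  have hsecbound : ∫⁻ w in Set.Ioo (t - d) t, Ffun T R ψ φ (w, x)
      ≤ ENNReal.ofReal (2 * U / D) := by
    calc ∫⁻ w in Set.Ioo (t - d) t, Ffun T R ψ φ (w, x)
        ≤ ∫⁻ w, Ffun T R ψ φ (w, x) := setLIntegral_le_lintegral _ _
      _ = Jbar T R ψ φ x := rfl
      _ ≤ ENNReal.ofReal (2 * U / D) := hJx
  obtain ⟨y, hyA, hy1, hy2⟩ := exists_good_point hA hd0 hvol (measurable_Jbar hF) hsecm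
    ENNReal.ofReal_ne_top ENNReal.ofReal_ne_top hJbound hsecbound
  obtain ⟨hty, hyt⟩ := hyA
  rw [two_ofReal_div hU hd0] at hy1
  have hy2' : Ffun T R ψ φ (y, x) ≤ ENNReal.ofReal (4 * U / (d * D)) := by
    rw [two_ofReal_div (by positivity) hd0] at hy2
    refine hy2.trans (le_of_eq ?_)
    congr 1
    field_simp
    ring
  have hxy : x < y := by linarith
  have hO : (y, x) ∈ Oset T := ⟨by linarith, hxy, by linarith⟩
  have hq : qfun R ψ φ (y, x) ≤ ENNReal.ofReal (4 * U / (d * D)) := by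
    rwa [Ffun, Set.indicator_of_mem hO] at hy2'
  have hφxy : (0:ℝ) < φ (y - x) := by
    rw [← hφ0]
    exact hφm (Set.mem_Ici.mpr (le_refl 0)) (Set.mem_Ici.mpr (by linarith)) (by linarith)
  have h4nn : (0:ℝ) ≤ 4 * U / (d * D) := by positivity
  have hval : ψ (‖R y x‖ / φ (y - x)) ≤ 4 * U / (d * D) :=
    (ENNReal.ofReal_le_ofReal_iff h4nn).1 hq
  have hvnn : (0:ℝ) ≤ ‖R y x‖ / φ (y - x) := div_nonneg (norm_nonneg _) hφxy.le
  have hle := psiinv_ge hψm hψ0 hinv1 hinv2 hinv3 hvnn h4nn hval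
  have hnorm : ‖R y x‖ ≤ ψinv (4 * U / (d * D)) * φ (y - x) := by
    have h := mul_le_mul_of_nonneg_right hle hφxy.le
    rwa [div_mul_cancel₀ _ (ne_of_gt hφxy)] at h
  exact ⟨(y, d), ⟨by linarith, hyt, hd0, by linarith, by linarith, hy1⟩,
    ⟨hdδ, hdφ, hxy, hnorm⟩⟩
lemma per_step_bound {φ : StieltjesFunction ℝ} {ψinv : ℝ → ℝ}
    (hmono : ∀ y₁ y₂ : ℝ, 0 ≤ y₁ → y₁ ≤ y₂ → ψinv y₁ ≤ ψinv y₂)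
    (hnn : ∀ y : ℝ, 0 ≤ y → 0 ≤ ψinv y)
    (hφnn : ∀ x : ℝ, 0 ≤ x → 0 ≤ (φ : ℝ → ℝ) x)
    (hφmono : Monotone (φ : ℝ → ℝ))
    {U C : ℝ} (hU : 0 ≤ U) (hC : 0 ≤ C)
    {X δn gap d D' d' : ℝ}
    (hd'0 : 0 < d') (hd'd : d' ≤ d) (hdD : d ≤ D') (hdδ : d ≤ δn)
    (hgap0 : 0 ≤ gap) (hgap : gap ≤ δn)
    (hX0 : 0 ≤ X)
    (hX : X ≤ ψinv (4 * U / (d * D')) * φ gap)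
    (hφd : (φ : ℝ → ℝ) d = φ δn / 2) (hφd' : (φ : ℝ → ℝ) d' ≤ φ d / 2) :
    ENNReal.ofReal (X + ψinv (4 * C / δn ^ 2) * φ δn)
      ≤ 4 * ∫⁻ r in Set.Ioc d' d,
          (ENNReal.ofReal (ψinv (4 * U / r ^ 2)) + ENNReal.ofReal (ψinv (4 * C / r ^ 2)))
            ∂φ.measure := by
  have hd0 : 0 < d := lt_of_lt_of_le hd'0 hd'd
  have hδn0 : 0 < δn := lt_of_lt_of_le hd0 hdδ
  have hD'0 : 0 < D' := lt_of_lt_of_le hd0 hdD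
  set cU : ℝ := ψinv (4 * U / (d * D')) with hcU
  set cC : ℝ := ψinv (4 * C / δn ^ 2) with hcC
  have hcU0 : 0 ≤ cU := hnn _ (by positivity)
  have hcC0 : 0 ≤ cC := hnn _ (by positivity)
  have hφδnn : 0 ≤ (φ : ℝ → ℝ) δn := hφnn _ hδn0.le
  have hφgap : (φ : ℝ → ℝ) gap ≤ φ δn := hφmono hgap
  have hreal1 : X + cC * φ δn ≤ (cU + cC) * φ δn := by
    have h1 : X ≤ cU * φ δn := hX.trans (mul_le_mul_of_nonneg_left hφgap hcU0)
    nlinarith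
  have hreal2 : (φ : ℝ → ℝ) δn ≤ 4 * (φ d - φ d') := by linarith
  have hdiffnn : 0 ≤ (φ : ℝ → ℝ) d - φ d' := by linarith
  have hreal3 : X + cC * φ δn ≤ (cU + cC) * (4 * (φ d - φ d')) := by
    calc X + cC * φ δn ≤ (cU + cC) * φ δn := hreal1
      _ ≤ (cU + cC) * (4 * (φ d - φ d')) := by
          apply mul_le_mul_of_nonneg_left hreal2 (by positivity)
  have hmeas : φ.measure (Set.Ioc d' d) = ENNReal.ofReal (φ d - φ d') :=
    StieltjesFunction.measure_Ioc _ _ _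
  calc ENNReal.ofReal (X + cC * φ δn)
      ≤ ENNReal.ofReal ((cU + cC) * (4 * (φ d - φ d'))) := ENNReal.ofReal_le_ofReal hreal3
    _ = 4 * (ENNReal.ofReal (cU + cC) * ENNReal.ofReal (φ d - φ d')) := by
        rw [ENNReal.ofReal_mul (by positivity), ENNReal.ofReal_mul (by norm_num : (0:ℝ) ≤ 4)]
        rw [ENNReal.ofReal_ofNat]
        ring
    _ = 4 * (ENNReal.ofReal (cU + cC) * φ.measure (Set.Ioc d' d)) := by rw [hmeas]
    _ = 4 * ∫⁻ _ in Set.Ioc d' d, ENNReal.ofReal (cU + cC) ∂φ.measure := by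
        rw [setLIntegral_const, mul_comm (ENNReal.ofReal (cU + cC))]
    _ ≤ 4 * ∫⁻ r in Set.Ioc d' d,
          (ENNReal.ofReal (ψinv (4 * U / r ^ 2)) + ENNReal.ofReal (ψinv (4 * C / r ^ 2)))
            ∂φ.measure := by
        refine mul_le_mul_right ?_ 4
        refine lintegral_mono_ae ?_
        filter_upwards [ae_restrict_mem measurableSet_Ioc] with r hr
        obtain ⟨hr1, hr2⟩ := hr
        have hr0 : 0 < r := lt_of_le_of_lt hd'0.le hr1
        have hU1 : cU ≤ ψinv (4 * U / r ^ 2) := by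
          refine hmono _ _ (by positivity) ?_
          have hsq : r ^ 2 ≤ d * D' := by nlinarith
          gcongr
        have hC1 : cC ≤ ψinv (4 * C / r ^ 2) := by
          refine hmono _ _ (by positivity) ?_
          have hsq : r ^ 2 ≤ δn ^ 2 := by nlinarith
          gcongr
        calc ENNReal.ofReal (cU + cC)
            = ENNReal.ofReal cU + ENNReal.ofReal cC := ENNReal.ofReal_add hcU0 hcC0
          _ ≤ _ := add_le_add (ENNReal.ofReal_le_ofReal hU1) (ENNReal.ofReal_le_ofReal hC1)

lemma chain_sum_le (μ : Measure ℝ) (G : ℝ → ℝ≥0∞) {L : ℝ}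
    {a tail : ℕ → ℝ} {D : ℕ → ℝ} {A₀ : ℝ}
    (ha : ∀ n, 0 ≤ a n)
    (hD0 : ∀ n, 0 < D n) (hDmono : ∀ n, D (n + 1) ≤ D n) (hDL : D 0 ≤ L)
    (hstep : ∀ n, ENNReal.ofReal (a n) ≤ 4 * ∫⁻ r in Set.Ioc (D (n + 1)) (D n), G r ∂μ)
    (htel : ∀ N, A₀ ≤ (∑ n ∈ Finset.range N, a n) + tail N)
    (htail : Tendsto tail atTop (nhds 0)) :
    ENNReal.ofReal A₀ ≤ 4 * ∫⁻ r in Set.Ioc 0 L, G r ∂μ := by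
  refine limit_le_of_tendsto (fun N => ?_) htail
  calc ENNReal.ofReal A₀
      ≤ ENNReal.ofReal ((∑ n ∈ Finset.range N, a n) + tail N) :=
        ENNReal.ofReal_le_ofReal (htel N)
    _ ≤ ENNReal.ofReal (∑ n ∈ Finset.range N, a n) + ENNReal.ofReal (tail N) :=
        ENNReal.ofReal_add_le
    _ = (∑ n ∈ Finset.range N, ENNReal.ofReal (a n)) + ENNReal.ofReal (tail N) := by
        rw [ENNReal.ofReal_sum_of_nonneg (fun n _ => ha n)]
    _ ≤ (∑ n ∈ Finset.range N, 4 * ∫⁻ r in Set.Ioc (D (n + 1)) (D n), G r ∂μ)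
          + ENNReal.ofReal (tail N) := by
        gcongr with n hn
        exact hstep n
    _ = 4 * (∑ n ∈ Finset.range N, ∫⁻ r in Set.Ioc (D (n + 1)) (D n), G r ∂μ)
          + ENNReal.ofReal (tail N) := by rw [Finset.mul_sum]
    _ = 4 * (∫⁻ r in Set.Ioc (D N) (D 0), G r ∂μ) + ENNReal.ofReal (tail N) := by
        rw [sum_Ioc_telescope μ G hDmono N]
    _ ≤ 4 * (∫⁻ r in Set.Ioc 0 L, G r ∂μ) + ENNReal.ofReal (tail N) := by
        gcongr
        exact (hD0 N).le
/-- Extension of the inverse `ψ⁻¹` to `[0,∞]`, sending `∞` to `∞`. -/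
noncomputable def psiInvE (ψinv : ℝ → ℝ) (y : ℝ≥0∞) : ℝ≥0∞ :=
  if y = ⊤ then ⊤ else ENNReal.ofReal (ψinv y.toReal)

/-- Garsia–Rodemich–Rumsey inequality for doubly twisted increments,
with an absolute constant `c > 0` independent of all the data.
The increasing function `φ` is encoded as a Stieltjes function, so that the
Lebesgue–Stieltjes integral `∫ … dφ(r)` is the integral against `φ.measure`,
with values in `[0,∞]`. -/
theorem grr_doubly_twisted_increments :
    ∃ c : ℝ, 0 < c ∧
      ∀ (V : Type u) [NormedAddCommGroup V] [NormedSpace ℝ V] [CompleteSpace V],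
      ∀ (T : ℝ), 0 < T → ∀ (ξ η : ℝ), 0 ≤ ξ → 0 ≤ η →
      ∀ R : ℝ → ℝ → V,
      ContinuousOn (fun p : ℝ × ℝ => R p.1 p.2)
        {p : ℝ × ℝ | 0 ≤ p.2 ∧ p.2 ≤ p.1 ∧ p.1 ≤ T} →
      (∀ t : ℝ, 0 ≤ t → t ≤ T → R t t = 0) →
      ∀ (ψ : ℝ → ℝ) (φ : StieltjesFunction ℝ),
      ContinuousOn ψ (Set.Ici 0) → StrictMonoOn ψ (Set.Ici 0) →
      ψ 0 = 0 → Filter.Tendsto ψ Filter.atTop Filter.atTop →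
      ContinuousOn φ (Set.Ici 0) → StrictMonoOn φ (Set.Ici 0) → φ 0 = 0 →
      -- ψ⁻¹ : the inverse of ψ on [0,∞)
      ∀ ψinv : ℝ → ℝ,
      (∀ x : ℝ, 0 ≤ x → ψinv (ψ x) = x) →
      (∀ y : ℝ, 0 ≤ y → ψ (ψinv y) = y) →
      (∀ y : ℝ, 0 ≤ y → 0 ≤ ψinv y) →
      ∀ C : ℝ, 0 ≤ C →
      (∀ l₁ l₂ : ℝ, 0 ≤ l₁ → l₁ < l₂ → l₂ ≤ T → ∀ u : ℝ, l₁ ≤ u → u ≤ l₂ →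
        ‖R l₂ l₁ - Real.exp (-η * (u - l₁)) • R l₂ u
            - Real.exp (-ξ * (l₂ - u)) • R u l₁‖
          ≤ ψinv (4 * C / (l₂ - l₁) ^ 2) * φ (l₂ - l₁)) →
      ∀ s t : ℝ, 0 ≤ s → s ≤ t → t ≤ T →
        ENNReal.ofReal ‖R t s‖
          ≤ ENNReal.ofReal c *
              ∫⁻ r in Set.Ioc (0 : ℝ) (t - s),
                (psiInvE ψinv
                    (4 * (∫⁻ w in Set.Ioo (0 : ℝ) T, ∫⁻ v in Set.Ioo (0 : ℝ) w,
                            ENNReal.ofReal (ψ (‖R w v‖ / φ (w - v))))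
                      / ENNReal.ofReal (r ^ 2))
                  + ENNReal.ofReal (ψinv (4 * C / r ^ 2))) ∂φ.measure := by
  refine ⟨9, by norm_num, ?_⟩
  intro V _ _ _ T hT ξ η hξ hη R hR hRdiag ψ φ hψc hψm hψ0 hψtop hφc hφm hφ0
    ψinv hinv1 hinv2 hinv3 C hC htw s t hs hst htT
  -- trivial case s = t
  rcases eq_or_lt_of_le hst with heq | hst'
  · subst heq
    rw [hRdiag s hs (hst.trans htT), norm_zero, ENNReal.ofReal_zero]
    exact zero_le
  have hts0 : 0 < t - s := by linarith
  have hφmono : Monotone (φ : ℝ → ℝ) := φ.mono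
  have hφnn : ∀ x : ℝ, 0 ≤ x → 0 ≤ (φ : ℝ → ℝ) x := fun x hx => by
    rw [← hφ0]; exact hφmono hx
  have hφpos : ∀ x : ℝ, 0 < x → 0 < (φ : ℝ → ℝ) x := fun x hx => by
    rw [← hφ0]
    exact hφm (Set.mem_Ici.mpr le_rfl) (Set.mem_Ici.mpr hx.le) hx
  have hmono' : ∀ y₁ y₂ : ℝ, 0 ≤ y₁ → y₁ ≤ y₂ → ψinv y₁ ≤ ψinv y₂ :=
    fun _ _ h1 h2 => psiinv_mono hψm hinv2 hinv3 h1 h2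
  set U' := ∫⁻ w in Set.Ioo (0 : ℝ) T, ∫⁻ v in Set.Ioo (0 : ℝ) w,
    ENNReal.ofReal (ψ (‖R w v‖ / φ (w - v))) with hU'def
  have hμIoc : φ.measure (Set.Ioc (0 : ℝ) (t - s)) = ENNReal.ofReal (φ (t - s)) := by
    rw [StieltjesFunction.measure_Ioc, hφ0, sub_zero]
  have hμpos : φ.measure (Set.Ioc (0 : ℝ) (t - s)) ≠ 0 := by
    rw [hμIoc]
    simp only [ne_eq, ENNReal.ofReal_eq_zero, not_le]
    exact hφpos _ hts0
  rcases eq_or_ne U' ⊤ with hUtop | hUfin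
  · -- infinite RHS
    have hint : ∀ r ∈ Set.Ioc (0 : ℝ) (t - s),
        (psiInvE ψinv (4 * U' / ENNReal.ofReal (r ^ 2))
          + ENNReal.ofReal (ψinv (4 * C / r ^ 2))) = (⊤ : ℝ≥0∞) := by
      intro r _
      have h1 : 4 * U' / ENNReal.ofReal (r ^ 2) = ⊤ := by
        rw [hUtop, ENNReal.mul_top (by norm_num : (4 : ℝ≥0∞) ≠ 0)]
        exact ENNReal.top_div_of_ne_top ENNReal.ofReal_ne_top
      rw [h1, psiInvE, if_pos rfl, top_add]
    have htop : ∫⁻ r in Set.Ioc (0 : ℝ) (t - s),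
        (psiInvE ψinv (4 * U' / ENNReal.ofReal (r ^ 2))
          + ENNReal.ofReal (ψinv (4 * C / r ^ 2))) ∂φ.measure = ⊤ := by
      rw [setLIntegral_congr_fun measurableSet_Ioc hint,
        setLIntegral_const]
      exact ENNReal.top_mul hμpos
    rw [htop, ENNReal.mul_top (by simp : ENNReal.ofReal 9 ≠ 0)]
    exact le_top
  -- U' finite
  set U : ℝ := U'.toReal with hUdef
  have hU0 : 0 ≤ U := ENNReal.toReal_nonneg
  have hU'eq : ENNReal.ofReal U = U' := ENNReal.ofReal_toReal hUfin
  have hGeq : ∫⁻ r in Set.Ioc (0 : ℝ) (t - s),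
      (psiInvE ψinv (4 * U' / ENNReal.ofReal (r ^ 2))
        + ENNReal.ofReal (ψinv (4 * C / r ^ 2))) ∂φ.measure
      = ∫⁻ r in Set.Ioc (0 : ℝ) (t - s),
          (ENNReal.ofReal (ψinv (4 * U / r ^ 2))
            + ENNReal.ofReal (ψinv (4 * C / r ^ 2))) ∂φ.measure := by
    refine setLIntegral_congr_fun measurableSet_Ioc ?_
    intro r hr
    have hr0 : 0 < r := hr.1
    have hden : ENNReal.ofReal (r ^ 2) ≠ 0 := by
      simp only [ne_eq, ENNReal.ofReal_eq_zero, not_le]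
      positivity
    have hne : 4 * U' / ENNReal.ofReal (r ^ 2) ≠ ⊤ :=
      (ENNReal.div_lt_top (by finiteness) hden).ne
    dsimp only
    rw [psiInvE, if_neg hne]
    congr 2
    rw [ENNReal.toReal_div, ENNReal.toReal_mul, ENNReal.toReal_ofNat,
      ENNReal.toReal_ofReal (by positivity : (0:ℝ) ≤ r ^ 2)]
  rw [hGeq]
  set Q := ∫⁻ r in Set.Ioc (0 : ℝ) (t - s),
      (ENNReal.ofReal (ψinv (4 * U / r ^ 2))
        + ENNReal.ofReal (ψinv (4 * C / r ^ 2))) ∂φ.measure with hQdef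
  -- kernel facts
  have hF : Measurable (Ffun T R ψ φ) := measurable_Ffun hR hψc hφc hφm hφ0
  have hItot : ∫⁻ w, Ibar T R ψ φ w = U' := lintegral_Ibar_eq
  have hJtot : ∫⁻ v, Jbar T R ψ φ v = U' := (lintegral_Jbar_eq hF).trans hItot
  have hItot' : ∫⁻ w, Ibar T R ψ φ w ≤ ENNReal.ofReal U := le_of_eq (hItot.trans hU'eq.symm)
  have hJtot' : ∫⁻ v, Jbar T R ψ φ v ≤ ENNReal.ofReal U := le_of_eq (hJtot.trans hU'eq.symm)
  -- anchor point
  have hvolst : volume (Set.Ioo s t) = ENNReal.ofReal (t - s) := Real.volume_Ioo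
  obtain ⟨aa, haA, haI, haJ⟩ := exists_good_point measurableSet_Ioo hts0 hvolst
    (measurable_Ibar hF) (measurable_Jbar hF) ENNReal.ofReal_ne_top ENNReal.ofReal_ne_top
    ((setLIntegral_le_lintegral _ _).trans hItot')
    ((setLIntegral_le_lintegral _ _).trans hJtot')
  rw [two_ofReal_div hU0 hts0] at haI haJ
  obtain ⟨hsa, hat⟩ := haA
  ---------------------------------------------------------------------------
  -- DOWNWARD CHAIN
  ---------------------------------------------------------------------------
  obtain ⟨seqD, hseqD0, hCondD, hRelD⟩ := build_chain
    (fun p : ℝ × ℝ => s < p.1 ∧ p.1 < t ∧ 0 < p.2 ∧ p.2 ≤ t - s ∧ p.1 - s < p.2 ∧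
        Ibar T R ψ φ p.1 ≤ ENNReal.ofReal (2 * U / p.2))
    (fun p q => q.2 < p.1 - s ∧ (φ : ℝ → ℝ) q.2 = φ (p.1 - s) / 2 ∧ q.1 < p.1 ∧
        ‖R p.1 q.1‖ ≤ ψinv (4 * U / (q.2 * p.2)) * φ (p.1 - q.1))
    (aa, t - s)
    ⟨hsa, hat, hts0, le_rfl, by simp only; linarith, haI⟩
    (stepD_exists hψm hψ0 hinv1 hinv2 hinv3 hφm hφ0 hφc hs hst' htT hU0 hF hItot')
  have htn_s : ∀ n, s < (seqD n).1 := fun n => (hCondD n).1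
  have htn_t : ∀ n, (seqD n).1 < t := fun n => (hCondD n).2.1
  have hdn0 : ∀ n, 0 < (seqD n).2 := fun n => (hCondD n).2.2.1
  have hdnts : ∀ n, (seqD n).2 ≤ t - s := fun n => (hCondD n).2.2.2.1
  have hδdn : ∀ n, (seqD n).1 - s < (seqD n).2 := fun n => (hCondD n).2.2.2.2.1
  have hreld1 : ∀ n, (seqD (n+1)).2 < (seqD n).1 - s := fun n => (hRelD n).1
  have hreld2 : ∀ n, (φ : ℝ → ℝ) (seqD (n+1)).2 = φ ((seqD n).1 - s) / 2 :=
    fun n => (hRelD n).2.1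
  have hreld3 : ∀ n, (seqD (n+1)).1 < (seqD n).1 := fun n => (hRelD n).2.2.1
  have hreld4 : ∀ n, ‖R (seqD n).1 (seqD (n+1)).1‖
      ≤ ψinv (4 * U / ((seqD (n+1)).2 * (seqD n).2)) * φ ((seqD n).1 - (seqD (n+1)).1) :=
    fun n => (hRelD n).2.2.2
  have hδpos : ∀ n, 0 < (seqD n).1 - s := fun n => by have := htn_s n; linarith
  -- per-step integral bound
  have hstepD' : ∀ n, ENNReal.ofReal
        (‖R (seqD n).1 (seqD (n+1)).1‖
          + ψinv (4 * C / ((seqD n).1 - s) ^ 2) * φ ((seqD n).1 - s))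
      ≤ 4 * ∫⁻ r in Set.Ioc (seqD (n+2)).2 (seqD (n+1)).2,
          (ENNReal.ofReal (ψinv (4 * U / r ^ 2))
            + ENNReal.ofReal (ψinv (4 * C / r ^ 2))) ∂φ.measure := by
    intro n
    refine per_step_bound hmono' hinv3 hφnn hφmono hU0 hC
      (hdn0 (n+2))
      (by have h1 := hreld1 (n+1); have h2 := hδdn (n+1); linarith)
      (by have h1 := hreld1 n; have h2 := hδdn n; linarith)
      (hreld1 n).le
      (by have := hreld3 n; linarith)
      (by have := htn_s (n+1); linarith)
      (norm_nonneg _)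
      (hreld4 n)
      (hreld2 n)
      ?_
    · have h1 : (φ : ℝ → ℝ) ((seqD (n+1)).1 - s) ≤ φ ((seqD (n+1)).2) :=
        hφmono (hδdn (n+1)).le
      have h2 := hreld2 (n+1)
      linarith
  -- telescoping
  have htn0 : (seqD 0).1 = aa := by rw [hseqD0]
  have htelD : ∀ N, ‖R aa s‖
      ≤ (∑ n ∈ Finset.range N,
          (‖R (seqD n).1 (seqD (n+1)).1‖
            + ψinv (4 * C / ((seqD n).1 - s) ^ 2) * φ ((seqD n).1 - s)))
        + ‖R (seqD N).1 s‖ := by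
    intro N
    induction N with
    | zero => simp [htn0]
    | succ N ih =>
      have hstep := twisted_triangle hξ hη htw hs (htn_s N) ((htn_t N).le.trans htT)
        (htn_s (N+1)).le (hreld3 N).le
      rw [Finset.sum_range_succ]
      have h2 : ‖R (seqD N).1 s‖
          ≤ (‖R (seqD N).1 (seqD (N+1)).1‖
              + ψinv (4 * C / ((seqD N).1 - s) ^ 2) * φ ((seqD N).1 - s))
            + ‖R (seqD (N+1)).1 s‖ := by linarith
      linarith
  -- tail limit
  have hφgeo : ∀ n, (φ : ℝ → ℝ) ((seqD (n+1)).1 - s) ≤ φ ((seqD n).1 - s) / 2 := by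
    intro n
    have h1 : (φ : ℝ → ℝ) ((seqD (n+1)).1 - s) ≤ φ ((seqD (n+1)).2) :=
      hφmono (hδdn (n+1)).le
    have h2 := hreld2 n
    linarith
  have hφgeo' : ∀ n, (φ : ℝ → ℝ) ((seqD n).1 - s) ≤ (1/2 : ℝ)^n * φ ((seqD 0).1 - s) := by
    intro n
    induction n with
    | zero => simp
    | succ n ih =>
      have := hφgeo n
      have h2 : (0:ℝ) < (1/2 : ℝ)^n := by positivity
      calc (φ : ℝ → ℝ) ((seqD (n+1)).1 - s) ≤ φ ((seqD n).1 - s) / 2 := hφgeo n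
        _ ≤ ((1/2:ℝ)^n * φ ((seqD 0).1 - s)) / 2 := by linarith
        _ = (1/2:ℝ)^(n+1) * φ ((seqD 0).1 - s) := by ring
  have hφδ0 : Tendsto (fun n => (φ : ℝ → ℝ) ((seqD n).1 - s)) atTop (nhds 0) := by
    refine squeeze_zero (fun n => hφnn _ (hδpos n).le) hφgeo' ?_
    have h1 : Tendsto (fun n : ℕ => (1/2:ℝ)^n) atTop (nhds 0) :=
      tendsto_pow_atTop_nhds_zero_of_lt_one (by norm_num) (by norm_num)
    simpa using h1.mul_const (φ ((seqD 0).1 - s))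
  have hδanti : Antitone (fun n => (seqD n).1 - s) := by
    refine antitone_nat_of_succ_le fun n => ?_
    have h1 := hreld1 n
    have h2 := hδdn (n+1)
    show (seqD (n+1)).1 - s ≤ (seqD n).1 - s
    linarith
  have hbdd : BddBelow (Set.range fun n => (seqD n).1 - s) :=
    ⟨0, by rintro x ⟨n, rfl⟩; exact (hδpos n).le⟩
  have hδlim : Tendsto (fun n => (seqD n).1 - s) atTop (nhds (⨅ n, (seqD n).1 - s)) :=
    tendsto_atTop_ciInf hδanti hbdd
  have hL0 : 0 ≤ ⨅ n, (seqD n).1 - s := le_ciInf fun n => (hδpos n).le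
  have hφL : (φ : ℝ → ℝ) (⨅ n, (seqD n).1 - s) = 0 := by
    have h1 : Tendsto (fun n => (φ : ℝ → ℝ) ((seqD n).1 - s)) atTop
        (nhds (φ (⨅ n, (seqD n).1 - s))) := by
      have hcw : ContinuousWithinAt (φ : ℝ → ℝ) (Set.Ici 0) (⨅ n, (seqD n).1 - s) :=
        hφc _ (Set.mem_Ici.mpr hL0)
      refine hcw.tendsto.comp ?_
      rw [tendsto_nhdsWithin_iff]
      exact ⟨hδlim, Filter.Eventually.of_forall fun n => Set.mem_Ici.mpr (hδpos n).le⟩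
    exact tendsto_nhds_unique h1 hφδ0
  have hLδ0 : (⨅ n, (seqD n).1 - s) = 0 := by
    by_contra h
    exact absurd hφL (ne_of_gt (hφpos _ (lt_of_le_of_ne hL0 (Ne.symm h))))
  have htnlim : Tendsto (fun n => (seqD n).1) atTop (nhds s) := by
    have h1 : Tendsto (fun n => ((seqD n).1 - s) + s) atTop (nhds (0 + s)) := by
      rw [← hLδ0]
      exact hδlim.add_const s
    simpa using h1
  have htailD : Tendsto (fun N => ‖R (seqD N).1 s‖) atTop (nhds 0) := by
    have hsmem : ((s, s) : ℝ × ℝ) ∈ {p : ℝ × ℝ | 0 ≤ p.2 ∧ p.2 ≤ p.1 ∧ p.1 ≤ T} :=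
      ⟨hs, le_rfl, hst.trans htT⟩
    have hRlim : Tendsto (fun n => R (seqD n).1 s) atTop (nhds (R s s)) := by
      have h1 : Tendsto (fun n => (((seqD n).1, s) : ℝ × ℝ)) atTop
          (nhdsWithin (s, s) {p : ℝ × ℝ | 0 ≤ p.2 ∧ p.2 ≤ p.1 ∧ p.1 ≤ T}) := by
        rw [tendsto_nhdsWithin_iff]
        exact ⟨htnlim.prodMk_nhds tendsto_const_nhds,
          Filter.Eventually.of_forall fun n => ⟨hs, (htn_s n).le, (htn_t n).le.trans htT⟩⟩
      exact ((hR (s, s) hsmem).tendsto.comp h1)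
    rw [hRdiag s hs (hst.trans htT)] at hRlim
    simpa using hRlim.norm
  -- chain sum for downward chain
  have hdownQ : ENNReal.ofReal ‖R aa s‖ ≤ 4 * Q := by
    rw [hQdef]
    refine chain_sum_le φ.measure
      (fun r => ENNReal.ofReal (ψinv (4 * U / r ^ 2)) + ENNReal.ofReal (ψinv (4 * C / r ^ 2)))
      (a := fun n => ‖R (seqD n).1 (seqD (n+1)).1‖
        + ψinv (4 * C / ((seqD n).1 - s) ^ 2) * φ ((seqD n).1 - s))
      (tail := fun N => ‖R (seqD N).1 s‖)
      (D := fun n => (seqD (n+1)).2)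
      (fun n => add_nonneg (norm_nonneg _)
        (mul_nonneg (hinv3 _ (by positivity)) (hφnn _ (hδpos n).le)))
      (fun n => hdn0 (n+1))
      (fun n => by have h1 := hreld1 (n+1); have h2 := hδdn (n+1); linarith)
      (by have h1 := hreld1 0; have h2 := htn_t 0; linarith)
      hstepD' htelD htailD
  ---------------------------------------------------------------------------
  -- UPWARD CHAIN
  ---------------------------------------------------------------------------
  obtain ⟨seqU, hseqU0, hCondU, hRelU⟩ := build_chain
    (fun p : ℝ × ℝ => s < p.1 ∧ p.1 < t ∧ 0 < p.2 ∧ p.2 ≤ t - s ∧ t - p.1 < p.2 ∧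
        Jbar T R ψ φ p.1 ≤ ENNReal.ofReal (2 * U / p.2))
    (fun p q => q.2 < t - p.1 ∧ (φ : ℝ → ℝ) q.2 = φ (t - p.1) / 2 ∧ p.1 < q.1 ∧
        ‖R q.1 p.1‖ ≤ ψinv (4 * U / (q.2 * p.2)) * φ (q.1 - p.1))
    (aa, t - s)
    ⟨hsa, hat, hts0, le_rfl, by simp only; linarith, haJ⟩
    (stepU_exists hψm hψ0 hinv1 hinv2 hinv3 hφm hφ0 hφc hs hst' htT hU0 hF hJtot')
  have hun_s : ∀ n, s < (seqU n).1 := fun n => (hCondU n).1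
  have hun_t : ∀ n, (seqU n).1 < t := fun n => (hCondU n).2.1
  have hen0 : ∀ n, 0 < (seqU n).2 := fun n => (hCondU n).2.2.1
  have hεen : ∀ n, t - (seqU n).1 < (seqU n).2 := fun n => (hCondU n).2.2.2.2.1
  have hrelu1 : ∀ n, (seqU (n+1)).2 < t - (seqU n).1 := fun n => (hRelU n).1
  have hrelu2 : ∀ n, (φ : ℝ → ℝ) (seqU (n+1)).2 = φ (t - (seqU n).1) / 2 :=
    fun n => (hRelU n).2.1
  have hrelu3 : ∀ n, (seqU n).1 < (seqU (n+1)).1 := fun n => (hRelU n).2.2.1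
  have hrelu4 : ∀ n, ‖R (seqU (n+1)).1 (seqU n).1‖
      ≤ ψinv (4 * U / ((seqU (n+1)).2 * (seqU n).2)) * φ ((seqU (n+1)).1 - (seqU n).1) :=
    fun n => (hRelU n).2.2.2
  have hεpos : ∀ n, 0 < t - (seqU n).1 := fun n => by have := hun_t n; linarith
  have hstepU' : ∀ n, ENNReal.ofReal
        (‖R (seqU (n+1)).1 (seqU n).1‖
          + ψinv (4 * C / (t - (seqU n).1) ^ 2) * φ (t - (seqU n).1))
      ≤ 4 * ∫⁻ r in Set.Ioc (seqU (n+2)).2 (seqU (n+1)).2,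
          (ENNReal.ofReal (ψinv (4 * U / r ^ 2))
            + ENNReal.ofReal (ψinv (4 * C / r ^ 2))) ∂φ.measure := by
    intro n
    refine per_step_bound hmono' hinv3 hφnn hφmono hU0 hC
      (hen0 (n+2))
      (by have h1 := hrelu1 (n+1); have h2 := hεen (n+1); linarith)
      (by have h1 := hrelu1 n; have h2 := hεen n; linarith)
      (hrelu1 n).le
      (by have := hrelu3 n; linarith)
      (by have := hun_t (n+1); linarith)
      (norm_nonneg _)
      (hrelu4 n)
      (hrelu2 n)
      ?_
    · have h1 : (φ : ℝ → ℝ) (t - (seqU (n+1)).1) ≤ φ ((seqU (n+1)).2) :=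
        hφmono (hεen (n+1)).le
      have h2 := hrelu2 (n+1)
      linarith
  have hun0 : (seqU 0).1 = aa := by rw [hseqU0]
  have htelU : ∀ N, ‖R t aa‖
      ≤ (∑ n ∈ Finset.range N,
          (‖R (seqU (n+1)).1 (seqU n).1‖
            + ψinv (4 * C / (t - (seqU n).1) ^ 2) * φ (t - (seqU n).1)))
        + ‖R t (seqU N).1‖ := by
    intro N
    induction N with
    | zero => simp [hun0]
    | succ N ih =>
      have hstep := twisted_triangle hξ hη htw (le_trans hs (hun_s N).le) (hun_t N) htT
        (hrelu3 N).le (hun_t (N+1)).le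
      rw [Finset.sum_range_succ]
      have h2 : ‖R t (seqU N).1‖
          ≤ (‖R (seqU (N+1)).1 (seqU N).1‖
              + ψinv (4 * C / (t - (seqU N).1) ^ 2) * φ (t - (seqU N).1))
            + ‖R t (seqU (N+1)).1‖ := by linarith
      linarith
  -- tail limit upward
  have hφgeoU : ∀ n, (φ : ℝ → ℝ) (t - (seqU (n+1)).1) ≤ φ (t - (seqU n).1) / 2 := by
    intro n
    have h1 : (φ : ℝ → ℝ) (t - (seqU (n+1)).1) ≤ φ ((seqU (n+1)).2) :=
      hφmono (hεen (n+1)).le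
    have h2 := hrelu2 n
    linarith
  have hφgeoU' : ∀ n, (φ : ℝ → ℝ) (t - (seqU n).1) ≤ (1/2 : ℝ)^n * φ (t - (seqU 0).1) := by
    intro n
    induction n with
    | zero => simp
    | succ n ih =>
      calc (φ : ℝ → ℝ) (t - (seqU (n+1)).1) ≤ φ (t - (seqU n).1) / 2 := hφgeoU n
        _ ≤ ((1/2:ℝ)^n * φ (t - (seqU 0).1)) / 2 := by linarith
        _ = (1/2:ℝ)^(n+1) * φ (t - (seqU 0).1) := by ring
  have hφε0 : Tendsto (fun n => (φ : ℝ → ℝ) (t - (seqU n).1)) atTop (nhds 0) := by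
    refine squeeze_zero (fun n => hφnn _ (hεpos n).le) hφgeoU' ?_
    have h1 : Tendsto (fun n : ℕ => (1/2:ℝ)^n) atTop (nhds 0) :=
      tendsto_pow_atTop_nhds_zero_of_lt_one (by norm_num) (by norm_num)
    simpa using h1.mul_const (φ (t - (seqU 0).1))
  have hεanti : Antitone (fun n => t - (seqU n).1) := by
    refine antitone_nat_of_succ_le fun n => ?_
    have h1 := hrelu3 n
    show t - (seqU (n+1)).1 ≤ t - (seqU n).1
    linarith
  have hbddU : BddBelow (Set.range fun n => t - (seqU n).1) :=
    ⟨0, by rintro x ⟨n, rfl⟩; exact (hεpos n).le⟩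
  have hεlim : Tendsto (fun n => t - (seqU n).1) atTop (nhds (⨅ n, t - (seqU n).1)) :=
    tendsto_atTop_ciInf hεanti hbddU
  have hLU0 : 0 ≤ ⨅ n, t - (seqU n).1 := le_ciInf fun n => (hεpos n).le
  have hφLU : (φ : ℝ → ℝ) (⨅ n, t - (seqU n).1) = 0 := by
    have h1 : Tendsto (fun n => (φ : ℝ → ℝ) (t - (seqU n).1)) atTop
        (nhds (φ (⨅ n, t - (seqU n).1))) := by
      have hcw : ContinuousWithinAt (φ : ℝ → ℝ) (Set.Ici 0) (⨅ n, t - (seqU n).1) :=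
        hφc _ (Set.mem_Ici.mpr hLU0)
      refine hcw.tendsto.comp ?_
      rw [tendsto_nhdsWithin_iff]
      exact ⟨hεlim, Filter.Eventually.of_forall fun n => Set.mem_Ici.mpr (hεpos n).le⟩
    exact tendsto_nhds_unique h1 hφε0
  have hLεeq : (⨅ n, t - (seqU n).1) = 0 := by
    by_contra h
    exact absurd hφLU (ne_of_gt (hφpos _ (lt_of_le_of_ne hLU0 (Ne.symm h))))
  have hunlim : Tendsto (fun n => (seqU n).1) atTop (nhds t) := by
    have h1 : Tendsto (fun n => t - (t - (seqU n).1)) atTop (nhds (t - 0)) := by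
      rw [← hLεeq]
      exact tendsto_const_nhds.sub hεlim
    simpa using h1
  have htailU : Tendsto (fun N => ‖R t (seqU N).1‖) atTop (nhds 0) := by
    have h0t : 0 ≤ t := le_trans hs hst
    have htmem : ((t, t) : ℝ × ℝ) ∈ {p : ℝ × ℝ | 0 ≤ p.2 ∧ p.2 ≤ p.1 ∧ p.1 ≤ T} :=
      ⟨h0t, le_rfl, htT⟩
    have hRlim : Tendsto (fun n => R t (seqU n).1) atTop (nhds (R t t)) := by
      have h1 : Tendsto (fun n => ((t, (seqU n).1) : ℝ × ℝ)) atTop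
          (nhdsWithin (t, t) {p : ℝ × ℝ | 0 ≤ p.2 ∧ p.2 ≤ p.1 ∧ p.1 ≤ T}) := by
        rw [tendsto_nhdsWithin_iff]
        exact ⟨tendsto_const_nhds.prodMk_nhds hunlim,
          Filter.Eventually.of_forall fun n =>
            ⟨le_trans hs (hun_s n).le, (hun_t n).le, htT⟩⟩
      exact ((hR (t, t) htmem).tendsto.comp h1)
    rw [hRdiag t h0t htT] at hRlim
    simpa using hRlim.norm
  have hupQ : ENNReal.ofReal ‖R t aa‖ ≤ 4 * Q := by
    rw [hQdef]
    refine chain_sum_le φ.measure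
      (fun r => ENNReal.ofReal (ψinv (4 * U / r ^ 2)) + ENNReal.ofReal (ψinv (4 * C / r ^ 2)))
      (a := fun n => ‖R (seqU (n+1)).1 (seqU n).1‖
        + ψinv (4 * C / (t - (seqU n).1) ^ 2) * φ (t - (seqU n).1))
      (tail := fun N => ‖R t (seqU N).1‖)
      (D := fun n => (seqU (n+1)).2)
      (fun n => add_nonneg (norm_nonneg _)
        (mul_nonneg (hinv3 _ (by positivity)) (hφnn _ (hεpos n).le)))
      (fun n => hen0 (n+1))
      (fun n => by have h1 := hrelu1 (n+1); have h2 := hεen (n+1); linarith)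
      (by have h1 := hrelu1 0; have h2 := hun_s 0; linarith)
      hstepU' htelU htailU
  ---------------------------------------------------------------------------
  -- conclusion
  ---------------------------------------------------------------------------
  have htop := twisted_triangle hξ hη htw hs hst' htT hsa.le hat.le
  have hEtop : ENNReal.ofReal (ψinv (4 * C / (t - s) ^ 2) * φ (t - s)) ≤ Q := by
    rw [ENNReal.ofReal_mul (hinv3 _ (by positivity))]
    calc ENNReal.ofReal (ψinv (4 * C / (t - s) ^ 2)) * ENNReal.ofReal (φ (t - s))
        = ENNReal.ofReal (ψinv (4 * C / (t - s) ^ 2))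
            * φ.measure (Set.Ioc (0:ℝ) (t - s)) := by rw [hμIoc]
      _ = ∫⁻ _ in Set.Ioc (0:ℝ) (t - s),
            ENNReal.ofReal (ψinv (4 * C / (t - s) ^ 2)) ∂φ.measure := by
          rw [setLIntegral_const, mul_comm]
      _ ≤ Q := by
          rw [hQdef]
          refine lintegral_mono_ae ?_
          filter_upwards [ae_restrict_mem measurableSet_Ioc] with r hr
          have hr0 : 0 < r := hr.1
          have h1 : ψinv (4 * C / (t - s) ^ 2) ≤ ψinv (4 * C / r ^ 2) := by
            refine hmono' _ _ (by positivity) ?_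
            have hsq : r ^ 2 ≤ (t - s) ^ 2 := by nlinarith [hr.2]
            gcongr
          exact le_trans (ENNReal.ofReal_le_ofReal h1) (self_le_add_left _ _)
  calc ENNReal.ofReal ‖R t s‖
      ≤ ENNReal.ofReal (‖R t aa‖ + ‖R aa s‖
          + ψinv (4 * C / (t - s) ^ 2) * φ (t - s)) := ENNReal.ofReal_le_ofReal htop
    _ ≤ ENNReal.ofReal (‖R t aa‖ + ‖R aa s‖)
          + ENNReal.ofReal (ψinv (4 * C / (t - s) ^ 2) * φ (t - s)) := ENNReal.ofReal_add_le
    _ ≤ ENNReal.ofReal ‖R t aa‖ + ENNReal.ofReal ‖R aa s‖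
          + ENNReal.ofReal (ψinv (4 * C / (t - s) ^ 2) * φ (t - s)) := by
        exact add_le_add_left ENNReal.ofReal_add_le _
    _ ≤ 4 * Q + 4 * Q + Q :=
        add_le_add (add_le_add hupQ hdownQ) hEtop
    _ = 9 * Q := by ring
    _ = ENNReal.ofReal 9 * Q := by rw [ENNReal.ofReal_ofNat]
end

section
/- Composition of a controlled path with a regular function. Let n, k, l ≥ 1, 0 < κ ≤ γ < 1, T > 0, I = [a,b] ⊆ [0,T]. Let x¹ assign to each s ≤ t in I a matrix x¹_{ts} ∈ ℝ^{1×n} with K_x := sup_{s<t} ‖x¹_{ts}‖/(t−s)^γ < ∞. Let z : I → ℝ^k be a controlled path: z_t − z_s = (x¹_{ts} ζ_s)ᵀ + r_{ts} with ζ : I → ℝ^{n×k} κ-Hölder and ‖r_{ts}‖ ≤ N_r (t−s)^{2κ}; set N[z;Q^κ] = N[z;C^κ] + N[ζ;C⁰] + N[ζ;C^κ] + N[r;C^{2κ}]. Let σ : ℝ^k → ℝ^l be twice continuously differentiable with sup‖Dσ‖ and sup‖D²σ‖ finite. Define ζ̂_s = ζ_s (Dσ(z_s))ᵀ ∈ ℝ^{n×l}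 and r̂_{ts} = Dσ(z_s) r_{ts} + [ σ(z_t) − σ(z_s) − Dσ(z_s)(z_t − z_s) ]. Then σ(z)_t − σ(z)_s = (x¹_{ts} ζ̂_s)ᵀ + r̂_{ts} for all s ≤ t in I, and there is a constant c depending only on sup‖Dσ‖ and sup‖D²σ‖ such that N[σ(z);C^κ] + N[ζ̂;C⁰] + N[ζ̂;C^κ] + N[r̂;C^{2κ}] ≤ c ( 1 + N[z;Q^κ]² ). -/
open MeasureTheory Matrix
open scoped ENNReal

attribute [local instance] Matrix.normedAddCommGroup Matrix.normedSpace

/-- The Jacobian matrix `Dσ(v) ∈ ℝ^{l×k}` of a map `σ : ℝ^k → ℝ^l`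
(column vectors being encoded as `k×1` matrices). -/
noncomputable def jacobian {k l : ℕ}
    (σ : Matrix (Fin k) (Fin 1) ℝ → Matrix (Fin l) (Fin 1) ℝ)
    (v : Matrix (Fin k) (Fin 1) ℝ) : Matrix (Fin l) (Fin k) ℝ :=
  Matrix.of fun i j => fderiv ℝ σ v (Matrix.single j 0 1) i 0

section Helpers

noncomputable instance instCLMNAG {k l : ℕ} :
    NormedAddCommGroup (Matrix (Fin k) (Fin 1) ℝ →L[ℝ] Matrix (Fin l) (Fin 1) ℝ) :=
  ContinuousLinearMap.toNormedAddCommGroup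

noncomputable instance instCLMNS {k l : ℕ} :
    NormedSpace ℝ (Matrix (Fin k) (Fin 1) ℝ →L[ℝ] Matrix (Fin l) (Fin 1) ℝ) :=
  ContinuousLinearMap.toNormedSpace

noncomputable instance instCLM2NAG {k l : ℕ} :
    NormedAddCommGroup (Matrix (Fin k) (Fin 1) ℝ →L[ℝ]
      (Matrix (Fin k) (Fin 1) ℝ →L[ℝ] Matrix (Fin l) (Fin 1) ℝ)) :=
  ContinuousLinearMap.toNormedAddCommGroup

lemma mat_norm_mul_le {m n p : ℕ} (A : Matrix (Fin m) (Fin n) ℝ) (B : Matrix (Fin n) (Fin p) ℝ) :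
    ‖A * B‖ ≤ (n : ℝ) * ‖A‖ * ‖B‖ := by
  rw [Matrix.norm_le_iff (by positivity)]
  intro i j
  rw [Matrix.mul_apply]
  calc ‖∑ c, A i c * B c j‖ ≤ ∑ c, ‖A i c * B c j‖ := norm_sum_le _ _
    _ ≤ ∑ _c : Fin n, ‖A‖ * ‖B‖ := by
        refine Finset.sum_le_sum fun c _ => ?_
        rw [norm_mul]
        exact mul_le_mul (Matrix.norm_entry_le_entrywise_sup_norm A)
          (Matrix.norm_entry_le_entrywise_sup_norm B) (norm_nonneg _) (norm_nonneg _)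
    _ = (n : ℝ) * ‖A‖ * ‖B‖ := by simp [Finset.sum_const, mul_assoc]

lemma fderiv_apply_eq_jacobian_mul {k l : ℕ}
    (σ : Matrix (Fin k) (Fin 1) ℝ → Matrix (Fin l) (Fin 1) ℝ)
    (v w : Matrix (Fin k) (Fin 1) ℝ) :
    fderiv ℝ σ v w = jacobian σ v * w := by
  have hw : w = ∑ c : Fin k, w c 0 • Matrix.single c (0 : Fin 1) (1:ℝ) := by
    ext i j
    have hj : j = 0 := Subsingleton.elim _ _
    subst hj
    simp [Matrix.sum_apply, Matrix.single, Finset.sum_ite_eq]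
  conv_lhs => rw [hw]
  rw [map_sum]
  ext i j
  have hj : j = 0 := Subsingleton.elim _ _
  subst hj
  rw [Matrix.mul_apply, Matrix.sum_apply]
  refine Finset.sum_congr rfl fun c _ => ?_
  rw [_root_.map_smul, Matrix.smul_apply, smul_eq_mul]
  simp [jacobian, mul_comm]

lemma norm_jacobian_le {k l : ℕ}
    (σ : Matrix (Fin k) (Fin 1) ℝ → Matrix (Fin l) (Fin 1) ℝ)
    (v : Matrix (Fin k) (Fin 1) ℝ) :
    ‖jacobian σ v‖ ≤ ‖fderiv ℝ σ v‖ := by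
  rw [Matrix.norm_le_iff (norm_nonneg _)]
  intro i j
  have h1 : ‖(fderiv ℝ σ v (Matrix.single j 0 1)) i 0‖ ≤
      ‖fderiv ℝ σ v (Matrix.single j 0 1)‖ :=
    Matrix.norm_entry_le_entrywise_sup_norm _
  refine h1.trans ?_
  calc ‖fderiv ℝ σ v (Matrix.single j 0 1)‖
      ≤ ‖fderiv ℝ σ v‖ * ‖(Matrix.single j (0:Fin 1) (1:ℝ))‖ :=
        ContinuousLinearMap.le_opNorm _ _
    _ ≤ ‖fderiv ℝ σ v‖ * 1 := by
        refine mul_le_mul_of_nonneg_left ?_ (norm_nonneg _)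
        rw [Matrix.norm_le_iff zero_le_one]
        intro i j'
        simp only [Matrix.single, Matrix.of_apply]
        split_ifs <;> simp
    _ = ‖fderiv ℝ σ v‖ := mul_one _

lemma norm_jacobian_sub_le {k l : ℕ}
    (σ : Matrix (Fin k) (Fin 1) ℝ → Matrix (Fin l) (Fin 1) ℝ)
    (u v : Matrix (Fin k) (Fin 1) ℝ) :
    ‖jacobian σ u - jacobian σ v‖ ≤ ‖fderiv ℝ σ u - fderiv ℝ σ v‖ := by
  rw [Matrix.norm_le_iff (norm_nonneg _)]
  intro i j
  have : (jacobian σ u - jacobian σ v) i j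
      = ((fderiv ℝ σ u - fderiv ℝ σ v) (Matrix.single j 0 1)) i 0 := by
    simp [jacobian, Matrix.sub_apply]
  rw [this]
  refine (Matrix.norm_entry_le_entrywise_sup_norm _).trans ?_
  calc ‖(fderiv ℝ σ u - fderiv ℝ σ v) (Matrix.single j 0 1)‖
      ≤ ‖fderiv ℝ σ u - fderiv ℝ σ v‖ * ‖(Matrix.single j (0:Fin 1) (1:ℝ))‖ :=
        ContinuousLinearMap.le_opNorm _ _
    _ ≤ ‖fderiv ℝ σ u - fderiv ℝ σ v‖ * 1 := by
        refine mul_le_mul_of_nonneg_left ?_ (norm_nonneg _)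
        rw [Matrix.norm_le_iff zero_le_one]
        intro i j'
        simp only [Matrix.single, Matrix.of_apply]
        split_ifs <;> simp
    _ = _ := mul_one _

variable {k l : ℕ}

lemma sigma_lipschitz (σ : Matrix (Fin k) (Fin 1) ℝ → Matrix (Fin l) (Fin 1) ℝ)
    (hσ : ContDiff ℝ 2 σ) {L1 : ℝ} (hL1 : ∀ v, ‖fderiv ℝ σ v‖ ≤ L1)
    (x y : Matrix (Fin k) (Fin 1) ℝ) : ‖σ y - σ x‖ ≤ L1 * ‖y - x‖ :=
  Convex.norm_image_sub_le_of_norm_fderiv_le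
    (fun u _ => (hσ.differentiable (by norm_num)).differentiableAt)
    (fun u _ => hL1 u) convex_univ (Set.mem_univ x) (Set.mem_univ y)

lemma fderiv_fderiv_bound (σ : Matrix (Fin k) (Fin 1) ℝ → Matrix (Fin l) (Fin 1) ℝ)
    {L2 : ℝ} (hL2 : ∀ v, ‖iteratedFDeriv ℝ 2 σ v‖ ≤ L2)
    (x : Matrix (Fin k) (Fin 1) ℝ) : ‖fderiv ℝ (fderiv ℝ σ) x‖ ≤ L2 := by
  have hL2' : 0 ≤ L2 := (norm_nonneg _).trans (hL2 x)
  refine ContinuousLinearMap.opNorm_le_bound _ hL2' fun m => ?_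
  refine ContinuousLinearMap.opNorm_le_bound _ (by positivity) fun w => ?_
  have h2 : fderiv ℝ (fderiv ℝ σ) x m w = iteratedFDeriv ℝ 2 σ x ![m, w] := by
    rw [iteratedFDeriv_two_apply]; simp; rfl
  refine (congrArg norm h2).trans_le ?_
  calc ‖iteratedFDeriv ℝ 2 σ x ![m, w]‖
      ≤ ‖iteratedFDeriv ℝ 2 σ x‖ * ∏ i, ‖![m, w] i‖ :=
        ContinuousMultilinearMap.le_opNorm _ _
    _ = ‖iteratedFDeriv ℝ 2 σ x‖ * (‖m‖ * ‖w‖) := by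
        simp [Fin.prod_univ_two]
    _ ≤ L2 * (‖m‖ * ‖w‖) := by
        refine mul_le_mul_of_nonneg_right (hL2 x) (by positivity)
    _ = L2 * ‖m‖ * ‖w‖ := by ring

lemma fderiv_lipschitz (σ : Matrix (Fin k) (Fin 1) ℝ → Matrix (Fin l) (Fin 1) ℝ)
    (hσ : ContDiff ℝ 2 σ) {L2 : ℝ} (hL2 : ∀ v, ‖iteratedFDeriv ℝ 2 σ v‖ ≤ L2)
    (x y : Matrix (Fin k) (Fin 1) ℝ) :
    ‖fderiv ℝ σ y - fderiv ℝ σ x‖ ≤ L2 * ‖y - x‖ := by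
  have hg : ContDiff ℝ 1 (fderiv ℝ σ) := hσ.fderiv_right (by norm_num)
  exact Convex.norm_image_sub_le_of_norm_fderiv_le
    (fun u _ => (hg.differentiable (by norm_num)).differentiableAt)
    (fun u _ => fderiv_fderiv_bound σ hL2 u) convex_univ (Set.mem_univ x) (Set.mem_univ y)

lemma taylor_remainder (σ : Matrix (Fin k) (Fin 1) ℝ → Matrix (Fin l) (Fin 1) ℝ)
    (hσ : ContDiff ℝ 2 σ) {L2 : ℝ} (hL2 : ∀ v, ‖iteratedFDeriv ℝ 2 σ v‖ ≤ L2)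
    (x y : Matrix (Fin k) (Fin 1) ℝ) :
    ‖σ y - σ x - fderiv ℝ σ x (y - x)‖ ≤ L2 * ‖y - x‖ * ‖y - x‖ := by
  have hseg : ∀ u ∈ segment ℝ x y, ‖u - x‖ ≤ ‖y - x‖ := by
    rintro u ⟨p, q, hp, hq, hpq, rfl⟩
    have hux : p • x + q • y - x = q • (y - x) := by
      have hp1 : p = 1 - q := by linarith
      rw [hp1]; module
    rw [hux, norm_smul, Real.norm_eq_abs, abs_of_nonneg hq]
    nlinarith [norm_nonneg (y - x)]
  exact Convex.norm_image_sub_le_of_norm_fderiv_le'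
    (fun u _ => (hσ.differentiable (by norm_num)).differentiableAt)
    (fun u hu => (fderiv_lipschitz σ hσ hL2 x u).trans
      (mul_le_mul_of_nonneg_left (hseg u hu) ((norm_nonneg _).trans (hL2 x))))
    (convex_segment x y) (left_mem_segment ℝ x y) (right_mem_segment ℝ x y)

lemma assemble_bound {k : ℕ} (hk : 1 ≤ k) {L1 L2 Nz Nζ0 Nζκ Nr T1 T2 T3 T4 : ℝ}
    (hL1n : 0 ≤ L1) (hL2n : 0 ≤ L2) (hNz : 0 ≤ Nz) (hNζ0 : 0 ≤ Nζ0)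
    (hNζκ : 0 ≤ Nζκ) (hNr : 0 ≤ Nr)
    (h1 : T1 ≤ L1 * Nz) (h2 : T2 ≤ (k : ℝ) * Nζ0 * L1)
    (h3 : T3 ≤ (k : ℝ) * Nζκ * L1 + (k : ℝ) * Nζ0 * (L2 * Nz))
    (h4 : T4 ≤ L1 * Nr + L2 * (Nz * Nz)) :
    T1 + T2 + T3 + T4
      ≤ (2 * (k : ℝ) + 2) * (L1 + L2) * (1 + (Nz + Nζ0 + Nζκ + Nr) ^ 2) := by
  set N : ℝ := Nz + Nζ0 + Nζκ + Nr with hN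
  have hNnn : 0 ≤ N := by positivity
  have hQ : 0 ≤ 1 + N ^ 2 := by positivity
  have hNleQ : N ≤ 1 + N ^ 2 := by nlinarith [sq_nonneg (N - 1)]
  have hq1 : Nz ≤ 1 + N ^ 2 := by nlinarith
  have hq2 : Nζ0 ≤ 1 + N ^ 2 := by nlinarith
  have hq3 : Nζκ ≤ 1 + N ^ 2 := by nlinarith
  have hq4 : Nr ≤ 1 + N ^ 2 := by nlinarith
  have hq5 : Nζ0 * Nz ≤ 1 + N ^ 2 := by nlinarith
  have hq6 : Nz * Nz ≤ 1 + N ^ 2 := by nlinarith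
  have hk1 : (1:ℝ) ≤ (k : ℝ) := by exact_mod_cast hk
  have hknn : (0:ℝ) ≤ (k : ℝ) := by positivity
  have e1 : L1 * Nz ≤ L1 * (1 + N ^ 2) := mul_le_mul_of_nonneg_left hq1 hL1n
  have e2 : (k : ℝ) * Nζ0 * L1 ≤ (k : ℝ) * (1 + N ^ 2) * L1 := by gcongr
  have e3 : (k : ℝ) * Nζκ * L1 ≤ (k : ℝ) * (1 + N ^ 2) * L1 := by gcongr
  have e4 : (k : ℝ) * Nζ0 * (L2 * Nz) ≤ (k : ℝ) * (L2 * (1 + N ^ 2)) := by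
    calc (k : ℝ) * Nζ0 * (L2 * Nz) = (k : ℝ) * (L2 * (Nζ0 * Nz)) := by ring
      _ ≤ (k : ℝ) * (L2 * (1 + N ^ 2)) := by gcongr
  have e5 : L1 * Nr ≤ L1 * (1 + N ^ 2) := mul_le_mul_of_nonneg_left hq4 hL1n
  have e6 : L2 * (Nz * Nz) ≤ L2 * (1 + N ^ 2) := mul_le_mul_of_nonneg_left hq6 hL2n
  have hkQ : 0 ≤ (k : ℝ) * (L2 * (1 + N ^ 2)) := by positivity
  have hL2Q : 0 ≤ L2 * (1 + N ^ 2) := by positivity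
  calc T1 + T2 + T3 + T4
      ≤ L1 * (1 + N ^ 2) + (k : ℝ) * (1 + N ^ 2) * L1
        + ((k : ℝ) * (1 + N ^ 2) * L1 + (k : ℝ) * (L2 * (1 + N ^ 2)))
        + (L1 * (1 + N ^ 2) + L2 * (1 + N ^ 2)) := by linarith
    _ ≤ (2 * (k : ℝ) + 2) * (L1 + L2) * (1 + N ^ 2) := by linarith [hkQ, hL2Q]

end Helpers

/-- composition of a controlled path with a regular function.
The constant `c` depends only on `sup‖Dσ‖ = L1` and `sup‖D²σ‖ = L2`
(and the dimensions, through the choice of norms). -/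
theorem controlled_path_composition (n k l : ℕ) (hn : 1 ≤ n) (hk : 1 ≤ k) (hl : 1 ≤ l)
    (κ γ : ℝ) (hκ0 : 0 < κ) (hκγ : κ ≤ γ) (hγ1 : γ < 1)
    (L1 L2 : ℝ) :
    ∃ c : ℝ,
      ∀ (T a b : ℝ), 0 < T → 0 ≤ a → a ≤ b → b ≤ T →
      ∀ (x1 : ℝ → ℝ → Matrix (Fin 1) (Fin n) ℝ) (Kx : ℝ),
      (∀ s t : ℝ, a ≤ s → s < t → t ≤ b → ‖x1 t s‖ ≤ Kx * (t - s) ^ γ) →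
      ∀ (z : ℝ → Matrix (Fin k) (Fin 1) ℝ)
        (ζ : ℝ → Matrix (Fin n) (Fin k) ℝ)
        (r : ℝ → ℝ → Matrix (Fin k) (Fin 1) ℝ)
        (Nz Nζ0 Nζκ Nr : ℝ),
      -- z is a controlled path: δz = (x¹ ζ)ᵀ + r
      (∀ s t : ℝ, a ≤ s → s ≤ t → t ≤ b → z t - z s = (x1 t s * ζ s)ᵀ + r t s) →
      (∀ s t : ℝ, a ≤ s → s < t → t ≤ b → ‖z t - z s‖ ≤ Nz * (t - s) ^ κ) →
      (∀ s : ℝ, a ≤ s → s ≤ b → ‖ζ s‖ ≤ Nζ0) →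
      (∀ s t : ℝ, a ≤ s → s < t → t ≤ b → ‖ζ t - ζ s‖ ≤ Nζκ * (t - s) ^ κ) →
      (∀ s t : ℝ, a ≤ s → s < t → t ≤ b → ‖r t s‖ ≤ Nr * (t - s) ^ (2 * κ)) →
      ∀ σ : Matrix (Fin k) (Fin 1) ℝ → Matrix (Fin l) (Fin 1) ℝ,
      ContDiff ℝ 2 σ →
      (∀ v, @norm _ ContinuousLinearMap.hasOpNorm (fderiv ℝ σ v) ≤ L1) →
      (∀ v, ‖iteratedFDeriv ℝ 2 σ v‖ ≤ L2) →
      -- the decomposition of σ(z) as a controlled path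
      ((∀ s t : ℝ, a ≤ s → s ≤ t → t ≤ b →
          σ (z t) - σ (z s)
            = (x1 t s * (ζ s * (jacobian σ (z s))ᵀ))ᵀ
              + (fderiv ℝ σ (z s) (r t s)
                  + (σ (z t) - σ (z s) - fderiv ℝ σ (z s) (z t - z s)))) ∧
        -- the bound on the controlled-path norm of σ(z):
        -- N[σ(z);C^κ] + N[ζ̂;C⁰] + N[ζ̂;C^κ] + N[r̂;C^{2κ}] ≤ c (1 + N[z;Q^κ]²)
        (∀ s₁ t₁ s₂ s₃ t₃ s₄ t₄ : ℝ,
          a ≤ s₁ → s₁ < t₁ → t₁ ≤ b → a ≤ s₂ → s₂ ≤ b →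
          a ≤ s₃ → s₃ < t₃ → t₃ ≤ b → a ≤ s₄ → s₄ < t₄ → t₄ ≤ b →
          ‖σ (z t₁) - σ (z s₁)‖ / (t₁ - s₁) ^ κ
            + ‖ζ s₂ * (jacobian σ (z s₂))ᵀ‖
            + ‖ζ t₃ * (jacobian σ (z t₃))ᵀ - ζ s₃ * (jacobian σ (z s₃))ᵀ‖ / (t₃ - s₃) ^ κ
            + ‖fderiv ℝ σ (z s₄) (r t₄ s₄)
                + (σ (z t₄) - σ (z s₄) - fderiv ℝ σ (z s₄) (z t₄ - z s₄))‖
              / (t₄ - s₄) ^ (2 * κ)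
            ≤ c * (1 + (Nz + Nζ0 + Nζκ + Nr) ^ 2))) := by
  refine ⟨(2 * (k : ℝ) + 2) * (|L1| + |L2|), ?_⟩
  intro T a b hT ha hab hbT x1 Kx hx1 z ζ r Nz Nζ0 Nζκ Nr hzdec hzκ hζ0 hζκ hr
    σ hσ hDσ hD2σ
  have hL1n : (0:ℝ) ≤ L1 := (norm_nonneg _).trans (hDσ 0)
  have hL2n : (0:ℝ) ≤ L2 := (norm_nonneg _).trans (hD2σ 0)
  constructor
  · -- decomposition
    intro s t has hst htb
    have hdz := hzdec s t has hst htb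
    have key : fderiv ℝ σ (z s) (z t - z s)
        = (x1 t s * (ζ s * (jacobian σ (z s))ᵀ))ᵀ + fderiv ℝ σ (z s) (r t s) := by
      rw [hdz, map_add]
      congr 1
      rw [fderiv_apply_eq_jacobian_mul]
      simp [Matrix.transpose_mul, Matrix.mul_assoc]
    rw [key]
    abel
  · -- norm bound
    intro s₁ t₁ s₂ s₃ t₃ s₄ t₄ ha1 h1 hb1 ha2 hb2 ha3 h3 hb3 ha4 h4 hb4
    have hp1 : (0:ℝ) < (t₁ - s₁) ^ κ := Real.rpow_pos_of_pos (sub_pos.2 h1) κ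
    have hp3 : (0:ℝ) < (t₃ - s₃) ^ κ := Real.rpow_pos_of_pos (sub_pos.2 h3) κ
    have hp4 : (0:ℝ) < (t₄ - s₄) ^ κ := Real.rpow_pos_of_pos (sub_pos.2 h4) κ
    have hp42 : (0:ℝ) < (t₄ - s₄) ^ (2 * κ) := Real.rpow_pos_of_pos (sub_pos.2 h4) _
    have hsq4 : (t₄ - s₄) ^ κ * (t₄ - s₄) ^ κ = (t₄ - s₄) ^ (2 * κ) := by
      rw [← Real.rpow_add (sub_pos.2 h4)]; ring_nf
    -- nonnegativity of the constants
    have hNz : 0 ≤ Nz := by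
      nlinarith [(norm_nonneg (z t₁ - z s₁)).trans (hzκ s₁ t₁ ha1 h1 hb1), hp1]
    have hNζ0 : 0 ≤ Nζ0 := (norm_nonneg _).trans (hζ0 s₂ ha2 hb2)
    have hNζκ : 0 ≤ Nζκ := by
      nlinarith [(norm_nonneg (ζ t₃ - ζ s₃)).trans (hζκ s₃ t₃ ha3 h3 hb3), hp3]
    have hNr : 0 ≤ Nr := by
      nlinarith [(norm_nonneg (r t₄ s₄)).trans (hr s₄ t₄ ha4 h4 hb4), hp42]
    -- term 1
    have hT1 : ‖σ (z t₁) - σ (z s₁)‖ / (t₁ - s₁) ^ κ ≤ L1 * Nz := by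
      rw [div_le_iff₀ hp1]
      calc ‖σ (z t₁) - σ (z s₁)‖ ≤ L1 * ‖z t₁ - z s₁‖ := sigma_lipschitz σ hσ hDσ _ _
        _ ≤ L1 * (Nz * (t₁ - s₁) ^ κ) :=
            mul_le_mul_of_nonneg_left (hzκ s₁ t₁ ha1 h1 hb1) hL1n
        _ = L1 * Nz * (t₁ - s₁) ^ κ := by ring
    -- term 2
    have hT2 : ‖ζ s₂ * (jacobian σ (z s₂))ᵀ‖ ≤ (k : ℝ) * Nζ0 * L1 := by
      calc ‖ζ s₂ * (jacobian σ (z s₂))ᵀ‖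
          ≤ (k : ℝ) * ‖ζ s₂‖ * ‖(jacobian σ (z s₂))ᵀ‖ := mat_norm_mul_le _ _
        _ ≤ (k : ℝ) * Nζ0 * L1 := by
            rw [Matrix.norm_transpose]
            have hb := (norm_jacobian_le σ (z s₂)).trans (hDσ (z s₂))
            have hz0 := hζ0 s₂ ha2 hb2
            gcongr
    -- term 3
    have hT3 : ‖ζ t₃ * (jacobian σ (z t₃))ᵀ - ζ s₃ * (jacobian σ (z s₃))ᵀ‖ / (t₃ - s₃) ^ κ
        ≤ (k : ℝ) * Nζκ * L1 + (k : ℝ) * Nζ0 * (L2 * Nz) := by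
      rw [div_le_iff₀ hp3]
      have hsplit : ζ t₃ * (jacobian σ (z t₃))ᵀ - ζ s₃ * (jacobian σ (z s₃))ᵀ
          = (ζ t₃ - ζ s₃) * (jacobian σ (z t₃))ᵀ
            + ζ s₃ * (jacobian σ (z t₃) - jacobian σ (z s₃))ᵀ := by
        rw [Matrix.transpose_sub, Matrix.sub_mul, Matrix.mul_sub]
        abel
      rw [hsplit]
      have hA : ‖(ζ t₃ - ζ s₃) * (jacobian σ (z t₃))ᵀ‖
          ≤ (k : ℝ) * (Nζκ * (t₃ - s₃) ^ κ) * L1 := by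
        refine (mat_norm_mul_le _ _).trans ?_
        rw [Matrix.norm_transpose]
        have hb := (norm_jacobian_le σ (z t₃)).trans (hDσ (z t₃))
        have hz3 := hζκ s₃ t₃ ha3 h3 hb3
        gcongr
      have hB : ‖ζ s₃ * (jacobian σ (z t₃) - jacobian σ (z s₃))ᵀ‖
          ≤ (k : ℝ) * Nζ0 * (L2 * (Nz * (t₃ - s₃) ^ κ)) := by
        refine (mat_norm_mul_le _ _).trans ?_
        rw [Matrix.norm_transpose]
        have hz0 := hζ0 s₃ ha3 (le_of_lt (lt_of_lt_of_le h3 hb3))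
        have hJ : ‖jacobian σ (z t₃) - jacobian σ (z s₃)‖ ≤ L2 * (Nz * (t₃ - s₃) ^ κ) := by
          refine (norm_jacobian_sub_le σ _ _).trans ?_
          refine (fderiv_lipschitz σ hσ hD2σ _ _).trans ?_
          exact mul_le_mul_of_nonneg_left (hzκ s₃ t₃ ha3 h3 hb3) hL2n
        gcongr
      calc ‖(ζ t₃ - ζ s₃) * (jacobian σ (z t₃))ᵀ
            + ζ s₃ * (jacobian σ (z t₃) - jacobian σ (z s₃))ᵀ‖
          ≤ ‖(ζ t₃ - ζ s₃) * (jacobian σ (z t₃))ᵀ‖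
            + ‖ζ s₃ * (jacobian σ (z t₃) - jacobian σ (z s₃))ᵀ‖ := norm_add_le _ _
        _ ≤ (k : ℝ) * (Nζκ * (t₃ - s₃) ^ κ) * L1
            + (k : ℝ) * Nζ0 * (L2 * (Nz * (t₃ - s₃) ^ κ)) := add_le_add hA hB
        _ = ((k : ℝ) * Nζκ * L1 + (k : ℝ) * Nζ0 * (L2 * Nz)) * (t₃ - s₃) ^ κ := by ring
    -- term 4
    have hT4 : ‖fderiv ℝ σ (z s₄) (r t₄ s₄)
          + (σ (z t₄) - σ (z s₄) - fderiv ℝ σ (z s₄) (z t₄ - z s₄))‖ / (t₄ - s₄) ^ (2 * κ)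
        ≤ L1 * Nr + L2 * (Nz * Nz) := by
      rw [div_le_iff₀ hp42]
      have hA : ‖fderiv ℝ σ (z s₄) (r t₄ s₄)‖ ≤ L1 * (Nr * (t₄ - s₄) ^ (2 * κ)) := by
        refine (ContinuousLinearMap.le_opNorm _ _).trans ?_
        have h1' := hDσ (z s₄)
        have h2' := hr s₄ t₄ ha4 h4 hb4
        gcongr
        exact h1'
      have hB : ‖σ (z t₄) - σ (z s₄) - fderiv ℝ σ (z s₄) (z t₄ - z s₄)‖
          ≤ L2 * (Nz * (t₄ - s₄) ^ κ) * (Nz * (t₄ - s₄) ^ κ) := by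
        refine (taylor_remainder σ hσ hD2σ _ _).trans ?_
        have hz4 := hzκ s₄ t₄ ha4 h4 hb4
        have hnn : 0 ≤ Nz * (t₄ - s₄) ^ κ := (norm_nonneg _).trans hz4
        exact mul_le_mul (mul_le_mul_of_nonneg_left hz4 hL2n) hz4 (norm_nonneg _)
          (mul_nonneg hL2n hnn)
      refine (norm_add_le _ _).trans ((add_le_add hA hB).trans (le_of_eq ?_))
      rw [← hsq4]; ring
    -- assemble
    have habs : |L1| = L1 := abs_of_nonneg hL1n
    have habs2 : |L2| = L2 := abs_of_nonneg hL2n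
    rw [habs, habs2]
    exact assemble_bound hk hL1n hL2n hNz hNζ0 hNζκ hNr hT1 hT2 hT3 hT4
end

section
/- Contour estimate for the regularized fractional Brownian kernel. For 0 ≤ s < t, let z₁(u) = s + iu, z₂(u) = s + u + i(t−s), z₃(u) = t + i(t−s) − iu for u ∈ [0, t−s] (unit-speed parametrizations of the three segments of the path from s to t through s + i(t−s) and t + i(t−s) in the upper complex half-plane), and let w_k(v) = conjugate of z_k(v) for k = 1,2,3. Then for every α ∈ (0,1) there exists a constant c = c(α) > 0 such that for all 0 ≤ s < t and all ε > 0, ∑_{j=1}^{3} ∑_{k=1}^{3} ∫₀^{t−s} ∫₀^{t−s} | −i (z_j(u) − w_k(v)) + ε |^{α−2} du dv ≤ c (t−s)^α. -/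
/-- The three unit-speed segments of the path from `s` to `t` through
`s + i(t−s)` and `t + i(t−s)` in the upper complex half-plane:
`z₁(u) = s + iu`, `z₂(u) = s + u + i(t−s)`, `z₃(u) = t + i(t−s) − iu`,
for `u ∈ [0, t−s]`. -/
noncomputable def zpath (s t : ℝ) : Fin 3 → ℝ → ℂ :=
  ![fun u => (s : ℂ) + (u : ℂ) * Complex.I,
    fun u => ((s + u : ℝ) : ℂ) + ((t - s : ℝ) : ℂ) * Complex.I,
    fun u => (t : ℂ) + ((t - s - u : ℝ) : ℂ) * Complex.I]


open MeasureTheory intervalIntegral Set Real NNReal Interval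

/-- auxiliary matrix of imaginary-part profiles -/
noncomputable def gmat (L : ℝ) : Fin 3 → ℝ → ℝ :=
  ![fun u => u, fun _ => L, fun u => L - u]

lemma real_rpow_add_le {x y p : ℝ} (hx : 0 ≤ x) (hy : 0 ≤ y) (hp : 0 ≤ p) (hp1 : p ≤ 1) :
    (x + y) ^ p ≤ x ^ p + y ^ p := by
  have h := NNReal.rpow_add_le_add_rpow x.toNNReal y.toNNReal hp hp1
  have hx' : ((x.toNNReal : ℝ)) = x := Real.coe_toNNReal x hx
  have hy' : ((y.toNNReal : ℝ)) = y := Real.coe_toNNReal y hy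
  calc (x + y) ^ p = (((x.toNNReal + y.toNNReal : ℝ≥0) : ℝ)) ^ p := by
        rw [NNReal.coe_add, hx', hy']
    _ = (((x.toNNReal + y.toNNReal) ^ p : ℝ≥0) : ℝ) := by
        rw [← NNReal.coe_rpow]
    _ ≤ ((x.toNNReal ^ p + y.toNNReal ^ p : ℝ≥0) : ℝ) := by exact_mod_cast h
    _ = x ^ p + y ^ p := by
        rw [NNReal.coe_add, NNReal.coe_rpow, NNReal.coe_rpow, hx', hy']

lemma inner_core {α : ℝ} (hα0 : 0 < α) (hα1 : α < 1) {a L : ℝ} (ha : 0 < a) (hL : 0 ≤ L) :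
    ∫ v in (0:ℝ)..L, (a + v) ^ (α - 2) ≤ a ^ (α - 1) / (1 - α) := by
  have h1 : (∫ v in (0:ℝ)..L, (a + v) ^ (α - 2)) = ∫ x in a..(a + L), x ^ (α - 2) := by
    simpa using intervalIntegral.integral_comp_add_left (a := (0:ℝ)) (b := L)
      (fun x : ℝ => x ^ (α - 2)) a
  have h0 : (0:ℝ) ∉ [[a, a + L]] := by
    rw [Set.uIcc_of_le (by linarith)]
    intro h; exact absurd h.1 (by linarith)
  rw [h1, integral_rpow (Or.inr ⟨by intro h; exact absurd (by linarith : α = 1) (by linarith), h0⟩)]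
  have he : α - 2 + 1 = α - 1 := by ring
  rw [he]
  have hnn : 0 ≤ (a + L) ^ (α - 1) := Real.rpow_nonneg (by linarith) _
  have hpos : (0:ℝ) < 1 - α := by linarith
  have heq : ((a + L) ^ (α - 1) - a ^ (α - 1)) / (α - 1)
      = (a ^ (α - 1) - (a + L) ^ (α - 1)) / (1 - α) := by
    rw [div_eq_div_iff (by linarith) (by linarith)]; ring
  rw [heq]
  exact (div_le_div_iff_of_pos_right hpos).mpr (by linarith)

lemma gmat_cont (L : ℝ) (k : Fin 3) : Continuous (gmat L k) := by
  fin_cases k <;> simp [gmat] <;> fun_prop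

lemma gmat_nonneg {L : ℝ} (k : Fin 3) {u : ℝ} (hu : u ∈ Icc (0:ℝ) L) : 0 ≤ gmat L k u := by
  obtain ⟨h1, h2⟩ := hu
  fin_cases k <;> simp [gmat] <;> linarith

lemma inner_bound {α : ℝ} (hα0 : 0 < α) (hα1 : α < 1) {a L : ℝ} (ha : 0 < a) (hL : 0 ≤ L)
    (k : Fin 3) :
    ∫ v in (0:ℝ)..L, (a + gmat L k v) ^ (α - 2) ≤ a ^ (α - 1) / (1 - α) := by
  have hcore := inner_core hα0 hα1 ha hL
  fin_cases k
  · simpa [gmat] using hcore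
  · simp only [gmat]
    have hint : IntervalIntegrable (fun v : ℝ => (a + v) ^ (α - 2)) volume 0 L := by
      apply ContinuousOn.intervalIntegrable
      apply ContinuousOn.rpow_const ((continuous_const.add continuous_id).continuousOn)
      intro x hx
      rw [Set.uIcc_of_le hL] at hx
      exact Or.inl (by intro h; simp only [Pi.add_apply, id_eq] at h; nlinarith [hx.1])
    have h1 : (∫ v in (0:ℝ)..L, (a + L) ^ (α - 2)) ≤ ∫ v in (0:ℝ)..L, (a + v) ^ (α - 2) := by
      refine intervalIntegral.integral_mono_on hL intervalIntegrable_const hint ?_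
      intro v hv
      exact Real.rpow_le_rpow_of_nonpos (by linarith [hv.1]) (by linarith [hv.2]) (by linarith)
    refine le_trans (le_of_eq ?_) (h1.trans hcore)
    apply intervalIntegral.integral_congr
    intro v hv
    simp [gmat]
  · simp [gmat]
    refine le_trans (le_of_eq ?_) hcore
    have := intervalIntegral.integral_comp_sub_left (a := (0:ℝ)) (b := L)
      (fun x : ℝ => (a + x) ^ (α - 2)) L
    simpa using this

lemma outer_core {α : ℝ} (hα0 : 0 < α) (hα1 : α < 1) {L ε : ℝ} (hL : 0 ≤ L) (hε : 0 < ε) :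
    ∫ u in (0:ℝ)..L, (u + ε) ^ (α - 1) ≤ L ^ α / α := by
  have h1 : (∫ u in (0:ℝ)..L, (u + ε) ^ (α - 1)) = ∫ u in (0:ℝ)..L, (ε + u) ^ (α - 1) := by
    apply intervalIntegral.integral_congr
    intro u hu
    dsimp only
    rw [add_comm]
  have h2 : (∫ u in (0:ℝ)..L, (ε + u) ^ (α - 1)) = ∫ x in ε..(ε + L), x ^ (α - 1) := by
    simpa using intervalIntegral.integral_comp_add_left (a := (0:ℝ)) (b := L)
      (fun x : ℝ => x ^ (α - 1)) ε
  rw [h1, h2, integral_rpow (Or.inl (by linarith))]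
  have he : α - 1 + 1 = α := by ring
  rw [he]
  have hsub : (ε + L) ^ α ≤ ε ^ α + L ^ α := real_rpow_add_le hε.le hL hα0.le hα1.le
  have hεα : 0 ≤ ε ^ α := Real.rpow_nonneg hε.le _
  exact div_le_div_of_nonneg_right (by linarith) hα0.le |>.trans_eq rfl

lemma outer_bound {α : ℝ} (hα0 : 0 < α) (hα1 : α < 1) {L ε : ℝ} (hL : 0 ≤ L) (hε : 0 < ε)
    (j : Fin 3) :
    ∫ u in (0:ℝ)..L, (gmat L j u + ε) ^ (α - 1) ≤ L ^ α / α := by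
  have hcore := outer_core hα0 hα1 hL hε
  fin_cases j
  · simpa [gmat] using hcore
  · simp only [gmat]
    have h1 : (∫ u in (0:ℝ)..L, (![fun u : ℝ => u, fun _ => L, fun u => L - u]
        (⟨1, by norm_num⟩ : Fin 3) u + ε) ^ (α - 1)) = L * (L + ε) ^ (α - 1) := by
      simp
    rw [h1]
    rcases eq_or_lt_of_le hL with hL0 | hL0
    · rw [← hL0]
      simp [Real.zero_rpow (ne_of_gt hα0)]
    · have hstep : L * (L + ε) ^ (α - 1) ≤ L * L ^ (α - 1) := by
        apply mul_le_mul_of_nonneg_left ?_ hL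
        exact Real.rpow_le_rpow_of_nonpos hL0 (by linarith) (by linarith)
      have heq : L * L ^ (α - 1) = L ^ α := by
        rw [← Real.rpow_one_add' (le_of_lt hL0) (by intro h; nlinarith)]
        ring_nf
      have hfin : L ^ α ≤ L ^ α / α := by
        rw [le_div_iff₀ hα0]
        nlinarith [Real.rpow_nonneg hL α]
      calc L * (L + ε) ^ (α - 1) ≤ L * L ^ (α - 1) := hstep
        _ = L ^ α := heq
        _ ≤ L ^ α / α := hfin
  · simp only [gmat]
    refine le_trans (le_of_eq ?_) hcore
    have h2 := intervalIntegral.integral_comp_sub_left (a := (0:ℝ)) (b := L)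
      (fun x : ℝ => (x + ε) ^ (α - 1)) L
    simp only [sub_self, sub_zero] at h2
    refine Eq.trans ?_ h2
    apply intervalIntegral.integral_congr
    intro u hu
    simp [gmat]


lemma zpath_im (s t : ℝ) (j : Fin 3) (u : ℝ) :
    (zpath s t j u).im = gmat (t - s) j u := by
  fin_cases j <;> simp [zpath, gmat]

lemma zpath_cont (s t : ℝ) (j : Fin 3) : Continuous (zpath s t j) := by
  have h0 : Continuous fun u : ℝ => (s : ℂ) + (u : ℂ) * Complex.I := by fun_prop
  have h1 : Continuous fun u : ℝ => ((s + u : ℝ) : ℂ) + ((t - s : ℝ) : ℂ) * Complex.I := by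
    fun_prop
  have h2 : Continuous fun u : ℝ => (t : ℂ) + ((t - s - u : ℝ) : ℂ) * Complex.I := by fun_prop
  fin_cases j
  · exact h0
  · exact h1
  · exact h2

lemma re_formula (z w : ℂ) (ε : ℝ) :
    (-Complex.I * (z - (starRingEnd ℂ) w) + (ε : ℂ)).re = z.im + w.im + ε := by
  simp [Complex.add_re, Complex.mul_re, Complex.sub_im, Complex.sub_re, Complex.conj_im,
    Complex.conj_re]

lemma pair_bound {α : ℝ} (hα0 : 0 < α) (hα1 : α < 1) (s t ε : ℝ) (hst : s < t) (hε : 0 < ε)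
    (j k : Fin 3) :
    (∫ u in (0:ℝ)..(t - s), ∫ v in (0:ℝ)..(t - s),
        ‖-Complex.I * (zpath s t j u - (starRingEnd ℂ) (zpath s t k v))
            + (ε : ℂ)‖ ^ (α - 2))
      ≤ (t - s) ^ α / (α * (1 - α)) := by
  set L := t - s with hLdef
  have hL : 0 ≤ L := by simp [hLdef]; linarith
  have h1α : (0:ℝ) < 1 - α := by linarith
  -- the real part of the regularized kernel argument
  have hre : ∀ u v : ℝ,
      (-Complex.I * (zpath s t j u - (starRingEnd ℂ) (zpath s t k v)) + (ε : ℂ)).re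
        = gmat L j u + gmat L k v + ε := by
    intro u v
    rw [re_formula, zpath_im, zpath_im]
  -- continuity of the modulus in `v`
  have hWc : ∀ u : ℝ, Continuous fun v : ℝ =>
      ‖-Complex.I * (zpath s t j u - (starRingEnd ℂ) (zpath s t k v)) + (ε : ℂ)‖ := by
    intro u
    exact continuous_norm.comp
      ((continuous_const.mul (continuous_const.sub
        (continuous_star.comp (zpath_cont s t k)))).add continuous_const)
  -- positivity of the modulus on the square
  have habs : ∀ u ∈ Icc (0:ℝ) L, ∀ v ∈ Icc (0:ℝ) L,
      0 < ‖-Complex.I * (zpath s t j u - (starRingEnd ℂ) (zpath s t k v))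
        + (ε : ℂ)‖ := by
    intro u hu v hv
    refine lt_of_lt_of_le ?_ (Complex.re_le_norm _)
    rw [hre]
    have := gmat_nonneg j hu
    have := gmat_nonneg k hv
    linarith
  -- inner bound for every u in the square
  have step2 : ∀ u ∈ Icc (0:ℝ) L,
      (∫ v in (0:ℝ)..L,
          ‖-Complex.I * (zpath s t j u - (starRingEnd ℂ) (zpath s t k v))
            + (ε : ℂ)‖ ^ (α - 2))
        ≤ (gmat L j u + ε) ^ (α - 1) / (1 - α) := by
    intro u hu
    have hgj : 0 ≤ gmat L j u := gmat_nonneg j hu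
    have ha : 0 < gmat L j u + ε := by linarith
    have hint1 : IntervalIntegrable (fun v : ℝ =>
        ‖-Complex.I * (zpath s t j u - (starRingEnd ℂ) (zpath s t k v))
          + (ε : ℂ)‖ ^ (α - 2)) volume 0 L := by
      apply ContinuousOn.intervalIntegrable
      apply ContinuousOn.rpow_const (hWc u).continuousOn
      intro v hv
      rw [Set.uIcc_of_le hL] at hv
      exact Or.inl (ne_of_gt (habs u hu v hv))
    have hint2 : IntervalIntegrable (fun v : ℝ => ((gmat L j u + ε) + gmat L k v) ^ (α - 2))
        volume 0 L := by
      apply ContinuousOn.intervalIntegrable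
      apply ContinuousOn.rpow_const (continuous_const.add (gmat_cont L k)).continuousOn
      intro v hv
      rw [Set.uIcc_of_le hL] at hv
      exact Or.inl (ne_of_gt (by have := gmat_nonneg k hv; simp only [Pi.add_apply]; linarith))
    refine le_trans (intervalIntegral.integral_mono_on hL hint1 hint2 ?_) ?_
    · intro v hv
      have hrepos : 0 < gmat L j u + gmat L k v + ε := by
        have := gmat_nonneg k hv; linarith
      have h := Real.rpow_le_rpow_of_nonpos (x := (-Complex.I * (zpath s t j u
          - (starRingEnd ℂ) (zpath s t k v)) + (ε : ℂ)).re)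
        (by rw [hre]; exact hrepos) (Complex.re_le_norm _) (by linarith : α - 2 ≤ 0)
      refine le_trans h (le_of_eq ?_)
      rw [hre, show gmat L j u + gmat L k v + ε = (gmat L j u + ε) + gmat L k v from by ring]
    · exact inner_bound hα0 hα1 ha hL k
  by_cases hFi : IntervalIntegrable (fun u : ℝ => ∫ v in (0:ℝ)..L,
      ‖-Complex.I * (zpath s t j u - (starRingEnd ℂ) (zpath s t k v))
        + (ε : ℂ)‖ ^ (α - 2)) volume 0 L
  · have hint3 : IntervalIntegrable (fun u : ℝ => (gmat L j u + ε) ^ (α - 1) / (1 - α))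
        volume 0 L := by
      apply ContinuousOn.intervalIntegrable
      apply ContinuousOn.div_const
      apply ContinuousOn.rpow_const ((gmat_cont L j).add continuous_const).continuousOn
      intro u hu
      rw [Set.uIcc_of_le hL] at hu
      exact Or.inl (ne_of_gt (by have := gmat_nonneg j hu; simp only [Pi.add_apply]; linarith))
    calc (∫ u in (0:ℝ)..L, ∫ v in (0:ℝ)..L,
          ‖-Complex.I * (zpath s t j u - (starRingEnd ℂ) (zpath s t k v))
            + (ε : ℂ)‖ ^ (α - 2))
        ≤ ∫ u in (0:ℝ)..L, (gmat L j u + ε) ^ (α - 1) / (1 - α) :=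
          intervalIntegral.integral_mono_on hL hFi hint3 step2
      _ = (∫ u in (0:ℝ)..L, (gmat L j u + ε) ^ (α - 1)) / (1 - α) :=
          intervalIntegral.integral_div _ _
      _ ≤ (L ^ α / α) / (1 - α) :=
          div_le_div_of_nonneg_right (outer_bound hα0 hα1 hL hε j) h1α.le
      _ = L ^ α / (α * (1 - α)) := by rw [div_div]
  · rw [intervalIntegral.integral_undef hFi]
    apply div_nonneg (Real.rpow_nonneg hL α) (by nlinarith)

/-- contour estimate for the regularized fractional Brownian
kernel.  The paths `w_k` are the complex conjugates of the paths `z_k`. -/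
theorem contour_estimate_fbm_kernel (α : ℝ) (hα0 : 0 < α) (hα1 : α < 1) :
    ∃ c : ℝ, 0 < c ∧
      ∀ s t ε : ℝ, 0 ≤ s → s < t → 0 < ε →
        (∑ j : Fin 3, ∑ k : Fin 3,
          ∫ u in (0 : ℝ)..(t - s), ∫ v in (0 : ℝ)..(t - s),
            ‖-Complex.I * (zpath s t j u - (starRingEnd ℂ) (zpath s t k v))
                + (ε : ℂ)‖ ^ (α - 2))
          ≤ c * (t - s) ^ α := by
  refine ⟨9 / (α * (1 - α)), div_pos (by norm_num) (by nlinarith), ?_⟩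
  intro s t ε hs hst hε
  calc (∑ j : Fin 3, ∑ k : Fin 3,
        ∫ u in (0 : ℝ)..(t - s), ∫ v in (0 : ℝ)..(t - s),
          ‖-Complex.I * (zpath s t j u - (starRingEnd ℂ) (zpath s t k v))
              + (ε : ℂ)‖ ^ (α - 2))
      ≤ ∑ _j : Fin 3, ∑ _k : Fin 3, (t - s) ^ α / (α * (1 - α)) :=
        Finset.sum_le_sum fun j _ => Finset.sum_le_sum fun k _ =>
          pair_bound hα0 hα1 s t ε hst hε j k
    _ = 9 / (α * (1 - α)) * (t - s) ^ α := by
        simp [Finset.sum_const, Finset.card_univ, nsmul_eq_mul]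
        ring
end
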